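/- arXiv:2003.10710 — 6 statements merged into one kernel-verified Lean document; each statement's English description precedes it below -/
import Mathlib

section
/- Let $\nu > 0$, $\eta \geq 0$ an integer, and let $A_\nu$ be the $(\eta+1)\times(\eta+1)$ matrix with diagonal $-\nu$, superdiagonal $1$, zeros elsewhere. For any $x \in \mathbb{R}^{\eta+1}$ and all $t \geq 0$, the first coordinate of $e^{A_\nu t}x$ satisfies $(e^{A_\nu t}x)_1 \leq \max_{j=1,\dots,\eta+1}\max\{0, x_j / \nu^{j-1}\}$. -/
open Real Matrix Finset

lemma shift_pow_entry {n : ℕ} (k : ℕ) (i j : Fin n) :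
    ((Matrix.of fun i j : Fin n => if (j : ℕ) = (i : ℕ) + 1 then (1 : ℝ) else 0) ^ k) i j
      = if (j : ℕ) = (i : ℕ) + k then 1 else 0 := by
  induction k generalizing i with
  | zero =>
    simp [Matrix.one_apply, Fin.ext_iff, eq_comm]
  | succ k ih =>
    rw [pow_succ']
    simp only [Matrix.mul_apply, Matrix.of_apply]
    by_cases hi : (i : ℕ) + 1 < n
    · rw [Finset.sum_eq_single (⟨(i : ℕ) + 1, hi⟩ : Fin n)]
      · simp [ih, add_assoc, add_comm 1 k]
      · intro b _ hb
        have : (b : ℕ) ≠ (i : ℕ) + 1 := by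
          intro h; exact hb (Fin.ext h)
        simp [this]
      · simp
    · have hz : ∀ b : Fin n, (b : ℕ) ≠ (i : ℕ) + 1 := by
        intro b h
        exact hi (h ▸ b.isLt)
      have hj : (j : ℕ) ≠ (i : ℕ) + (k + 1) := by
        intro h
        have := j.isLt
        omega
      simp [hz, hj]

theorem flow_first_coordinate_bound (ν : ℝ) (hν : 0 < ν) (η : ℕ)
    (A : Matrix (Fin (η + 1)) (Fin (η + 1)) ℝ)
    (hA : ∀ i j : Fin (η + 1), A i j =
      if (j : ℕ) = (i : ℕ) then -ν else if (j : ℕ) = (i : ℕ) + 1 then 1 else 0)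
    (x : Fin (η + 1) → ℝ) (t : ℝ) (ht : 0 ≤ t) :
    (NormedSpace.exp (t • A)).mulVec x 0 ≤
      Finset.univ.sup' Finset.univ_nonempty (fun j : Fin (η + 1) => max 0 (x j / ν ^ (j : ℕ))) := by
  set N : Matrix (Fin (η + 1)) (Fin (η + 1)) ℝ :=
    Matrix.of fun i j : Fin (η + 1) => if (j : ℕ) = (i : ℕ) + 1 then (1 : ℝ) else 0 with hN
  -- decomposition of t • A
  have hdec : t • A = (-(ν * t)) • (1 : Matrix (Fin (η + 1)) (Fin (η + 1)) ℝ) + t • N := by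
    ext i j
    simp only [Matrix.add_apply, Matrix.smul_apply, Matrix.one_apply, hA i j, hN,
      Matrix.of_apply, smul_eq_mul]
    by_cases h1 : (j : ℕ) = (i : ℕ)
    · have : j = i := Fin.ext h1
      subst this
      simp
      ring
    · have : j ≠ i := fun h => h1 (by rw [h])
      by_cases h2 : (j : ℕ) = (i : ℕ) + 1 <;> simp [h1, h2, this, Ne.symm this]
  -- nilpotency
  have hNpow : ∀ k, η + 1 ≤ k → N ^ k = 0 := by
    intro k hk
    ext i j
    rw [hN, shift_pow_entry]
    have : (j : ℕ) ≠ (i : ℕ) + k := by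
      have := j.isLt
      omega
    simp [this]
  -- exp of the nilpotent part
  have hexpN : NormedSpace.exp (t • N)
      = ∑ k ∈ Finset.range (η + 1), (((Nat.factorial k : ℕ) : ℝ)⁻¹ * t ^ k) • N ^ k := by
    rw [NormedSpace.exp_eq_tsum ℝ]
    beta_reduce
    rw [tsum_eq_sum (s := Finset.range (η + 1))]
    · refine Finset.sum_congr rfl fun k _ => ?_
      rw [smul_pow, smul_smul]
    · intro k hk
      rw [smul_pow, hNpow k (by simpa using hk)]
      simp
  -- exp of the scalar part
  have hexp1 : NormedSpace.exp ((-(ν * t)) • (1 : Matrix (Fin (η + 1)) (Fin (η + 1)) ℝ))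
      = Real.exp (-(ν * t)) • (1 : Matrix (Fin (η + 1)) (Fin (η + 1)) ℝ) := by
    have hfun : (NormedSpace.exp (fun _ : Fin (η + 1) => -(ν * t)))
        = fun _ : Fin (η + 1) => Real.exp (-(ν * t)) := by
      funext i
      rw [Real.exp_eq_exp_ℝ]
      exact Pi.coe_exp _ i
    rw [Matrix.smul_one_eq_diagonal, Matrix.exp_diagonal, Matrix.smul_one_eq_diagonal, hfun]
  have hcomm : Commute ((-(ν * t)) • (1 : Matrix (Fin (η + 1)) (Fin (η + 1)) ℝ)) (t • N) :=
    (Commute.one_left (t • N)).smul_left _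
  have hsplit : NormedSpace.exp (t • A)
      = Real.exp (-(ν * t)) • ∑ k ∈ Finset.range (η + 1), (((Nat.factorial k : ℕ) : ℝ)⁻¹ * t ^ k) • N ^ k := by
    rw [hdec, Matrix.exp_add_of_commute _ _ hcomm, hexp1, hexpN, smul_mul_assoc, one_mul]
  -- compute the first coordinate
  have hval : (NormedSpace.exp (t • A)).mulVec x 0
      = Real.exp (-(ν * t)) * ∑ j : Fin (η + 1), t ^ (j : ℕ) / (Nat.factorial (j : ℕ) : ℝ) * x j := by
    rw [hsplit, Matrix.smul_mulVec]
    simp only [Pi.smul_apply, smul_eq_mul]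
    congr 1
    rw [Matrix.mulVec, dotProduct]
    refine Finset.sum_congr rfl fun j _ => ?_
    have hrow : (∑ k ∈ Finset.range (η + 1), (((Nat.factorial k : ℕ) : ℝ)⁻¹ * t ^ k) • N ^ k) 0 j
        = ((Nat.factorial (j : ℕ) : ℕ) : ℝ)⁻¹ * t ^ (j : ℕ) := by
      simp only [Matrix.sum_apply, Matrix.smul_apply, hN, shift_pow_entry, smul_eq_mul]
      have : ∀ k ∈ Finset.range (η + 1),
          (((Nat.factorial k : ℕ) : ℝ)⁻¹ * t ^ k) * (if (j : ℕ) = ((0 : Fin (η + 1)) : ℕ) + k then (1:ℝ) else 0)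
          = if (j : ℕ) = k then ((Nat.factorial k : ℕ) : ℝ)⁻¹ * t ^ k else 0 := by
        intro k _
        simp only [Fin.val_zero, zero_add]
        by_cases h : (j : ℕ) = k <;> simp [h]
      rw [Finset.sum_congr rfl this, Finset.sum_ite_eq (Finset.range (η + 1)) (j : ℕ)]
      simp [j.isLt]
    rw [hrow]
    ring
  rw [hval]
  set M := Finset.univ.sup' Finset.univ_nonempty
    (fun j : Fin (η + 1) => max 0 (x j / ν ^ (j : ℕ))) with hM
  have hM0 : 0 ≤ M := by
    rw [hM]
    exact le_trans (le_max_left _ _)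
      (Finset.le_sup' (fun j : Fin (η + 1) => max 0 (x j / ν ^ (j : ℕ)))
        (Finset.mem_univ (0 : Fin (η + 1))))
  have hxj : ∀ j : Fin (η + 1), x j ≤ M * ν ^ (j : ℕ) := by
    intro j
    have h1 : x j / ν ^ (j : ℕ) ≤ M := by
      rw [hM]
      exact le_trans (le_max_right _ _)
        (Finset.le_sup' (fun j : Fin (η + 1) => max 0 (x j / ν ^ (j : ℕ))) (Finset.mem_univ j))
    have hp : (0 : ℝ) < ν ^ (j : ℕ) := pow_pos hν _
    calc x j = x j / ν ^ (j : ℕ) * ν ^ (j : ℕ) := by field_simp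
      _ ≤ M * ν ^ (j : ℕ) := mul_le_mul_of_nonneg_right h1 hp.le
  have hsum : ∑ j : Fin (η + 1), t ^ (j : ℕ) / (Nat.factorial (j : ℕ) : ℝ) * x j ≤ M * Real.exp (ν * t) := by
    calc ∑ j : Fin (η + 1), t ^ (j : ℕ) / (Nat.factorial (j : ℕ) : ℝ) * x j
        ≤ ∑ j : Fin (η + 1), t ^ (j : ℕ) / (Nat.factorial (j : ℕ) : ℝ) * (M * ν ^ (j : ℕ)) := by
          refine Finset.sum_le_sum fun j _ => ?_
          exact mul_le_mul_of_nonneg_left (hxj j)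
            (div_nonneg (pow_nonneg ht _) (Nat.cast_nonneg _))
      _ = M * ∑ j : Fin (η + 1), (ν * t) ^ (j : ℕ) / (Nat.factorial (j : ℕ) : ℝ) := by
          rw [Finset.mul_sum]
          refine Finset.sum_congr rfl fun j _ => ?_
          rw [mul_pow]
          ring
      _ = M * ∑ k ∈ Finset.range (η + 1), (ν * t) ^ k / (Nat.factorial k : ℝ) := by
          congr 1
          exact Fin.sum_univ_eq_sum_range (fun k => (ν * t) ^ k / (Nat.factorial k : ℝ)) (η + 1)
      _ ≤ M * Real.exp (ν * t) := by
          exact mul_le_mul_of_nonneg_left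
            (Real.sum_le_exp_of_nonneg (mul_nonneg hν.le ht) _) hM0
  calc Real.exp (-(ν * t)) * ∑ j : Fin (η + 1), t ^ (j : ℕ) / (Nat.factorial (j : ℕ) : ℝ) * x j
      ≤ Real.exp (-(ν * t)) * (M * Real.exp (ν * t)) :=
        mul_le_mul_of_nonneg_left hsum (Real.exp_pos _).le
    _ = M := by
        rw [← mul_assoc, mul_comm (Real.exp (-(ν * t))) M, mul_assoc, ← Real.exp_add]
        simp
end

section
/- Let $\nu > 0$, $\Delta > 0$, $\eta \geq 0$, and for $x\in\mathbb{R}^{\eta+1}$ define $G(x) = \sum_{j=1}^{\eta+1}\frac{j}{\nu^{j-1}}|x_j|$. Let $A_\nu$ be the $(\eta+1)\times(\eta+1)$ matrix with diagonal $-\nu$, superdiagonal $1$, zeros elsewhere. Then $G(e^{A_\nu\Delta}x) \leq \left(e^{-\nu\Delta}\sum_{j=0}^{\eta}\frac{(\nu\Delta)^j}{j!}\right) G(x)$ for all $x \in \mathbb{R}^{\eta+1}$. -/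
open Real Matrix Finset



lemma Npow (η : ℕ) (N : Matrix (Fin (η+1)) (Fin (η+1)) ℝ)
    (hN : ∀ i j : Fin (η+1), N i j = if (j:ℕ) = (i:ℕ)+1 then 1 else 0) :
    ∀ n (i j : Fin (η+1)), (N^n) i j = if (j:ℕ) = (i:ℕ) + n then 1 else 0 := by
  intro n
  induction n with
  | zero => intro i j; simp [Matrix.one_apply, Fin.ext_iff, eq_comm]
  | succ n ih =>
    intro i j
    rw [pow_succ, Matrix.mul_apply]
    by_cases h : (j:ℕ) = (i:ℕ) + (n+1)
    · have hk : (i:ℕ) + n < η + 1 := by omega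
      rw [Finset.sum_eq_single_of_mem ⟨(i:ℕ)+n, hk⟩ (Finset.mem_univ _)]
      · rw [ih, hN]; simp [h]; omega
      · intro k _ hk'
        rw [ih, hN]
        have : ¬ ((k:ℕ) = (i:ℕ) + n) := by
          intro hc; apply hk'; apply Fin.ext; simpa using hc
        simp [this]
    · rw [Finset.sum_eq_zero, if_neg h]
      intro k _
      rw [ih, hN]
      by_cases h1 : (k:ℕ) = (i:ℕ) + n
      · by_cases h2 : (j:ℕ) = (k:ℕ)+1
        · omega
        · simp [h2]
      · simp [h1]


lemma key_sum (ν Δ : ℝ) (hν : 0 < ν) (hΔ : 0 < Δ) (η j : ℕ) (hj : j ≤ η) :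
    ∑ i ∈ Finset.range (j+1), ((i:ℝ)+1)/ν^i * (Δ^(j-i)/(j-i).factorial)
      ≤ (∑ k ∈ Finset.range (η+1), (ν*Δ)^k/(k.factorial)) * (((j:ℝ)+1)/ν^j) := by
  rw [← Finset.sum_range_reflect, Finset.sum_mul]
  have hsub : Finset.range (j+1) ⊆ Finset.range (η+1) := by
    apply Finset.range_subset_range.mpr; omega
  refine le_trans ?_ (Finset.sum_le_sum_of_subset_of_nonneg hsub ?_)
  · apply Finset.sum_le_sum
    intro k hk
    rw [Finset.mem_range] at hk
    have hk' : k ≤ j := by omega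
    have h1 : j + 1 - 1 - k = j - k := by omega
    have h2 : j - (j - k) = k := by omega
    rw [h1, h2]
    have hpow : ν^(j-k) * ν^k = ν^j := pow_sub_mul_pow ν hk'
    have heq : (ν*Δ)^k/(k.factorial) * (((j:ℝ)+1)/ν^j)
        = ((j:ℝ)+1) * (Δ^k/(ν^(j-k) * k.factorial)) := by
      rw [← hpow, mul_pow]; field_simp
    have heq2 : (((j-k:ℕ):ℝ)+1)/ν^(j-k) * (Δ^k/(k.factorial))
        = (((j-k:ℕ):ℝ)+1) * (Δ^k/(ν^(j-k) * k.factorial)) := by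
      field_simp
    rw [heq, heq2]
    have hcast : ((j-k:ℕ):ℝ) ≤ (j:ℝ) := Nat.cast_le.mpr (Nat.sub_le j k)
    have hc : (0:ℝ) ≤ Δ^k/(ν^(j-k) * k.factorial) := by positivity
    apply mul_le_mul_of_nonneg_right (by linarith) hc
  · intro k _ _
    positivity


lemma expScalar (η : ℕ) (c : ℝ) :
    NormedSpace.exp (c • (1 : Matrix (Fin (η+1)) (Fin (η+1)) ℝ)) = Real.exp c • 1 := by
  rw [NormedSpace.exp_eq_tsum ℝ]
  have h1 : ∀ n : ℕ, ((n.factorial:ℝ)⁻¹) • (c • (1 : Matrix (Fin (η+1)) (Fin (η+1)) ℝ))^n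
      = (((n.factorial:ℝ)⁻¹) • c^n) • (1 : Matrix (Fin (η+1)) (Fin (η+1)) ℝ) := by
    intro n
    rw [smul_pow, one_pow, smul_smul]; norm_num
  simp_rw [h1]
  rw [Summable.tsum_smul_const (NormedSpace.expSeries_summable' (𝕂 := ℝ) c)]
  congr 1
  rw [Real.exp_eq_exp_ℝ, NormedSpace.exp_eq_tsum ℝ]

lemma expN (η : ℕ) (Δ : ℝ) (N : Matrix (Fin (η+1)) (Fin (η+1)) ℝ)
    (hN : ∀ i j : Fin (η+1), N i j = if (j:ℕ) = (i:ℕ)+1 then 1 else 0) :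
    NormedSpace.exp (Δ • N) = ∑ n ∈ Finset.range (η+1), ((Δ^n / n.factorial) • N^n) := by
  rw [NormedSpace.exp_eq_tsum ℝ]
  simp only []
  rw [tsum_eq_sum (s := Finset.range (η+1))]
  · apply Finset.sum_congr rfl
    intro n _
    rw [smul_pow, smul_smul]
    congr 1
    rw [div_eq_inv_mul]
  · intro n hn
    rw [Finset.mem_range] at hn
    have hzero : N^n = 0 := by
      ext i j
      rw [Npow η N hN n i j]
      have : ¬ ((j:ℕ) = (i:ℕ) + n) := by omega
      simp [this]
    rw [smul_pow, hzero, smul_zero, smul_zero]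

lemma expEntry (ν Δ : ℝ) (η : ℕ) (A : Matrix (Fin (η + 1)) (Fin (η + 1)) ℝ)
    (hA : ∀ i j : Fin (η + 1), A i j =
      if (j : ℕ) = (i : ℕ) then -ν else if (j : ℕ) = (i : ℕ) + 1 then 1 else 0)
    (i j : Fin (η+1)) :
    NormedSpace.exp (Δ • A) i j = Real.exp (-(ν*Δ)) *
      (if (i:ℕ) ≤ (j:ℕ) then Δ^((j:ℕ)-(i:ℕ))/((j:ℕ)-(i:ℕ)).factorial else 0) := by
  set N : Matrix (Fin (η+1)) (Fin (η+1)) ℝ :=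
    Matrix.of (fun i j => if (j:ℕ) = (i:ℕ)+1 then 1 else 0) with hNdef
  have hN : ∀ i j : Fin (η+1), N i j = if (j:ℕ) = (i:ℕ)+1 then 1 else 0 := fun i j => rfl
  have hsplit : Δ • A = (-(ν*Δ)) • (1 : Matrix (Fin (η+1)) (Fin (η+1)) ℝ) + Δ • N := by
    ext a b
    simp only [Matrix.add_apply, Matrix.smul_apply, Matrix.one_apply, hA, hN, smul_eq_mul]
    by_cases h1 : (b:ℕ) = (a:ℕ)
    · have : a = b := Fin.ext h1.symm
      simp [this, h1]; ring
    · have : ¬ a = b := fun hc => h1 (by rw [hc])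
      by_cases h2 : (b:ℕ) = (a:ℕ)+1 <;> simp [this, h1, h2]
  have hcomm : Commute ((-(ν*Δ)) • (1 : Matrix (Fin (η+1)) (Fin (η+1)) ℝ)) (Δ • N) := by
    apply Commute.smul_left
    apply Commute.smul_right
    exact Commute.one_left N
  rw [hsplit, _root_.Matrix.exp_add_of_commute _ _ hcomm, expScalar η, expN η Δ N hN]
  rw [Matrix.smul_mul, Matrix.one_mul, Matrix.smul_apply, smul_eq_mul]
  congr 1
  rw [Matrix.sum_apply]
  simp only [Matrix.smul_apply, Npow η N hN, smul_eq_mul]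
  by_cases h : (i:ℕ) ≤ (j:ℕ)
  · rw [if_pos h]
    have hmem : (j:ℕ) - (i:ℕ) ∈ Finset.range (η+1) := by
      rw [Finset.mem_range]; omega
    rw [Finset.sum_eq_single_of_mem _ hmem]
    · have : (j:ℕ) = (i:ℕ) + ((j:ℕ) - (i:ℕ)) := by omega
      rw [if_pos this, mul_one]
    · intro n _ hn
      have : ¬ ((j:ℕ) = (i:ℕ) + n) := by omega
      rw [if_neg this, mul_zero]
  · rw [if_neg h]
    apply Finset.sum_eq_zero
    intro n _
    have : ¬ ((j:ℕ) = (i:ℕ) + n) := by omega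
    rw [if_neg this, mul_zero]

theorem lyapunov_contraction (ν Δ : ℝ) (hν : 0 < ν) (hΔ : 0 < Δ) (η : ℕ)
    (A : Matrix (Fin (η + 1)) (Fin (η + 1)) ℝ)
    (hA : ∀ i j : Fin (η + 1), A i j =
      if (j : ℕ) = (i : ℕ) then -ν else if (j : ℕ) = (i : ℕ) + 1 then 1 else 0)
    (G : (Fin (η + 1) → ℝ) → ℝ)
    (hG : ∀ x : Fin (η + 1) → ℝ,
      G x = ∑ j : Fin (η + 1), ((j : ℕ) + 1 : ℝ) / ν ^ (j : ℕ) * |x j|)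
    (x : Fin (η + 1) → ℝ) :
    G ((NormedSpace.exp (Δ • A)).mulVec x) ≤
      (Real.exp (-ν * Δ) * ∑ j ∈ Finset.range (η + 1), (ν * Δ) ^ j / j.factorial) * G x := by
  set c := Real.exp (-(ν*Δ)) with hc
  have hc0 : 0 < c := Real.exp_pos _
  set S := ∑ j ∈ Finset.range (η + 1), (ν * Δ) ^ j / (j.factorial : ℝ) with hS
  set T : Fin (η+1) → Fin (η+1) → ℝ := fun i j =>
    if (i:ℕ) ≤ (j:ℕ) then Δ^((j:ℕ)-(i:ℕ))/(((j:ℕ)-(i:ℕ)).factorial : ℝ) else 0 with hT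
  have hT0 : ∀ i j, 0 ≤ T i j := by
    intro i j; rw [hT]; dsimp only
    split <;> positivity
  set w : Fin (η+1) → ℝ := fun j => ((j:ℕ) + 1 : ℝ) / ν ^ (j:ℕ) with hw
  have hw0 : ∀ j, 0 ≤ w j := by intro j; rw [hw]; positivity
  have hE : ∀ i j, NormedSpace.exp (Δ • A) i j = c * T i j := fun i j =>
    expEntry ν Δ η A hA i j
  have hmv : ∀ i, |(NormedSpace.exp (Δ • A)).mulVec x i| ≤ ∑ j, c * T i j * |x j| := by
    intro i
    have : (NormedSpace.exp (Δ • A)).mulVec x i = ∑ j, c * T i j * x j := by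
      simp only [Matrix.mulVec, dotProduct, hE]
    rw [this]
    refine le_trans (Finset.abs_sum_le_sum_abs _ _) ?_
    apply Finset.sum_le_sum
    intro j _
    rw [abs_mul, abs_of_nonneg (by positivity : (0:ℝ) ≤ c * T i j)]
  have hneg : -ν * Δ = -(ν*Δ) := by ring
  rw [hG, hG, hneg]
  have step1 : ∑ i : Fin (η+1), ((i:ℕ) + 1 : ℝ) / ν ^ (i:ℕ) *
      |(NormedSpace.exp (Δ • A)).mulVec x i| ≤
      ∑ i : Fin (η+1), w i * ∑ j, c * T i j * |x j| := by
    apply Finset.sum_le_sum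
    intro i _
    exact mul_le_mul_of_nonneg_left (hmv i) (hw0 i)
  refine le_trans step1 ?_
  have swap : ∑ i : Fin (η+1), w i * ∑ j, c * T i j * |x j|
      = ∑ j : Fin (η+1), c * (∑ i, w i * T i j) * |x j| := by
    simp_rw [Finset.mul_sum, Finset.sum_mul]
    rw [Finset.sum_comm]
    apply Finset.sum_congr rfl; intro j _
    apply Finset.sum_congr rfl; intro i _
    ring
  rw [swap]
  have inner_le : ∀ j : Fin (η+1), ∑ i, w i * T i j ≤ S * w j := by
    intro j
    have hconv : ∑ i : Fin (η+1), w i * T i j =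
        ∑ i ∈ Finset.range ((j:ℕ)+1), ((i:ℝ)+1)/ν^i * (Δ^((j:ℕ)-i)/(((j:ℕ)-i).factorial : ℝ)) := by
      have h1 : ∑ i : Fin (η+1), w i * T i j = ∑ i ∈ Finset.range (η+1),
          (if i ≤ (j:ℕ) then ((i:ℝ)+1)/ν^i * (Δ^((j:ℕ)-i)/(((j:ℕ)-i).factorial : ℝ)) else 0) := by
        rw [← Fin.sum_univ_eq_sum_range (fun i => (if i ≤ (j:ℕ) then
          ((i:ℝ)+1)/ν^i * (Δ^((j:ℕ)-i)/(((j:ℕ)-i).factorial : ℝ)) else 0)) (η+1)]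
        apply Finset.sum_congr rfl
        intro i _
        rw [hw, hT]
        dsimp only
        by_cases h : (i:ℕ) ≤ (j:ℕ)
        · rw [if_pos h, if_pos h]
        · rw [if_neg h, if_neg h, mul_zero]
      rw [h1]
      have h2 : ∑ i ∈ Finset.range (η+1),
          (if i ≤ (j:ℕ) then ((i:ℝ)+1)/ν^i * (Δ^((j:ℕ)-i)/(((j:ℕ)-i).factorial : ℝ)) else 0)
          = ∑ i ∈ Finset.range ((j:ℕ)+1),
          (if i ≤ (j:ℕ) then ((i:ℝ)+1)/ν^i * (Δ^((j:ℕ)-i)/(((j:ℕ)-i).factorial : ℝ)) else 0) := by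
        symm
        apply Finset.sum_subset
        · apply Finset.range_subset_range.mpr; omega
        · intro i _ hi
          rw [Finset.mem_range] at hi
          rw [if_neg (by omega)]
      rw [h2]
      apply Finset.sum_congr rfl
      intro i hi
      rw [Finset.mem_range] at hi
      rw [if_pos (by omega)]
    rw [hconv, hS, hw]
    exact key_sum ν Δ hν hΔ η (j:ℕ) (by omega)
  have step2 : ∑ j : Fin (η+1), c * (∑ i, w i * T i j) * |x j|
      ≤ ∑ j : Fin (η+1), c * (S * w j) * |x j| := by
    apply Finset.sum_le_sum
    intro j _
    have h1 : c * (∑ i, w i * T i j) ≤ c * (S * w j) :=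
      mul_le_mul_of_nonneg_left (inner_le j) (le_of_lt hc0)
    exact mul_le_mul_of_nonneg_right h1 (abs_nonneg _)
  refine le_trans step2 ?_
  rw [Finset.mul_sum]
  apply le_of_eq
  apply Finset.sum_congr rfl
  intro j _
  rw [hw]
  ring
end

section
/- Let $\nu > 0$, $\Delta > 0$, $\eta \geq 0$ an integer, and let $b \in \mathbb{R}^{\eta+1}$ be the vector with entries $b_i = \frac{\Delta^{\eta+1-i}}{(\eta+1-i)!}$ for $i = 1,\dots,\eta+1$. Let $M$ be the $(\eta+1)\times(\eta+1)$ upper-triangular matrix with $M_{i,j} = e^{-\nu\Delta}\Delta^{j-i}/(j-i)!$ for $j \geq i$. Then the vectors $b, Mb, M^2 b, \dots, M^{\eta} b$ are linearly independent in $\mathbb{R}^{\eta+1}$. -/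
open Real Matrix Finset

lemma kalman_sum_helper (x y : ℝ) (n : ℕ) :
    ∑ m ∈ range (n + 1), x ^ m * y ^ (n - m) / ((m.factorial : ℝ) * (n - m).factorial)
      = (x + y) ^ n / n.factorial := by
  rw [add_pow, Finset.sum_div]
  refine Finset.sum_congr rfl fun m hm => ?_
  have hmn : m ≤ n := Nat.lt_succ_iff.mp (Finset.mem_range.mp hm)
  rw [Nat.cast_choose ℝ hmn]
  have h1 : (m.factorial : ℝ) ≠ 0 := Nat.cast_ne_zero.mpr m.factorial_ne_zero
  have h2 : ((n - m).factorial : ℝ) ≠ 0 := Nat.cast_ne_zero.mpr (n - m).factorial_ne_zero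
  have h3 : (n.factorial : ℝ) ≠ 0 := Nat.cast_ne_zero.mpr n.factorial_ne_zero
  field_simp

theorem kalman_rank_condition (ν Δ : ℝ) (hν : 0 < ν) (hΔ : 0 < Δ) (η : ℕ)
    (b : Fin (η + 1) → ℝ)
    (hb : ∀ i : Fin (η + 1), b i = Δ ^ (η - (i : ℕ)) / (η - (i : ℕ)).factorial)
    (M : Matrix (Fin (η + 1)) (Fin (η + 1)) ℝ)
    (hM : ∀ i j : Fin (η + 1), M i j =
      if (i : ℕ) ≤ (j : ℕ)
        then Real.exp (-ν * Δ) * Δ ^ ((j : ℕ) - (i : ℕ)) / ((j : ℕ) - (i : ℕ)).factorial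
        else 0) :
    LinearIndependent ℝ (fun j : Fin (η + 1) => (M ^ (j : ℕ)).mulVec b) := by
  set c : ℝ := Real.exp (-ν * Δ) with hc
  have hc0 : c ≠ 0 := Real.exp_ne_zero _
  -- Step 1: explicit formula for (M^j) b
  have key : ∀ j : ℕ, (M ^ j).mulVec b =
      fun i : Fin (η + 1) =>
        c ^ j * (((j : ℝ) + 1) * Δ) ^ (η - (i : ℕ)) / (η - (i : ℕ)).factorial := by
    intro j
    induction j with
    | zero =>
      funext i
      simp [hb i]
    | succ j ih =>
      funext i
      rw [pow_succ', ← Matrix.mulVec_mulVec, ih]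
      simp only [Matrix.mulVec, dotProduct]
      simp only [hM]
      rw [Fin.sum_univ_eq_sum_range (fun k =>
        (if (i:ℕ) ≤ k then c * Δ ^ (k - (i:ℕ)) / (k - (i:ℕ)).factorial else 0) *
          (c ^ j * (((j:ℝ) + 1) * Δ) ^ (η - k) / (η - k).factorial))]
      rw [← Finset.sum_filter_add_sum_filter_not (range (η+1)) (fun k => (i:ℕ) ≤ k)]
      have h2 : ∑ k ∈ (range (η+1)).filter (fun k => ¬ (i:ℕ) ≤ k),
          (if (i:ℕ) ≤ k then c * Δ ^ (k - (i:ℕ)) / (k - (i:ℕ)).factorial else 0) *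
            (c ^ j * (((j:ℝ) + 1) * Δ) ^ (η - k) / (η - k).factorial) = 0 := by
        refine Finset.sum_eq_zero fun k hk => ?_
        rw [Finset.mem_filter] at hk
        rw [if_neg hk.2, zero_mul]
      rw [h2, add_zero]
      have hfilter : (range (η+1)).filter (fun k => (i:ℕ) ≤ k) = Finset.Ico (i:ℕ) (η+1) := by
        ext k; simp [Finset.mem_filter, Finset.mem_Ico, and_comm]
      rw [hfilter, Finset.sum_Ico_eq_sum_range]
      have hi : (i:ℕ) ≤ η := Nat.lt_succ_iff.mp i.isLt
      have hrange : η + 1 - (i:ℕ) = (η - (i:ℕ)) + 1 := by omega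
      rw [hrange]
      set n := η - (i:ℕ) with hn
      have hterm : ∀ m ∈ range (n+1),
          (if (i:ℕ) ≤ (i:ℕ) + m then
              c * Δ ^ ((i:ℕ) + m - (i:ℕ)) / ((i:ℕ) + m - (i:ℕ)).factorial else 0) *
            (c ^ j * (((j:ℝ) + 1) * Δ) ^ (η - ((i:ℕ) + m)) / (η - ((i:ℕ)+m)).factorial)
          = c ^ (j+1) *
              (Δ ^ m * (((j:ℝ)+1)*Δ) ^ (n - m) / ((m.factorial : ℝ) * (n - m).factorial)) := by
        intro m hm
        have hmn : m ≤ n := Nat.lt_succ_iff.mp (Finset.mem_range.mp hm)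
        rw [if_pos (Nat.le_add_right _ _)]
        have e1 : (i:ℕ) + m - (i:ℕ) = m := by omega
        have e2 : η - ((i:ℕ) + m) = n - m := by omega
        rw [e1, e2, pow_succ]
        ring
      rw [Finset.sum_congr rfl hterm, ← Finset.mul_sum, kalman_sum_helper]
      have hΔsum : Δ + ((j:ℝ)+1)*Δ = (((j:ℝ)+1)+1)*Δ := by ring
      rw [hΔsum]
      push_cast
      ring
  -- Step 2: linear independence via a Vandermonde determinant
  have hv : (fun j : Fin (η + 1) => (M ^ (j : ℕ)).mulVec b)
      = fun (j : Fin (η+1)) (i : Fin (η+1)) =>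
          c ^ (j:ℕ) * ((((j:ℕ):ℝ) + 1) * Δ) ^ (η - (i:ℕ)) / (η - (i:ℕ)).factorial := by
    funext j
    rw [key (j:ℕ)]
  rw [hv]
  set x : Fin (η+1) → ℝ := fun j => (((j:ℕ):ℝ) + 1) * Δ with hx
  set W : Matrix (Fin (η+1)) (Fin (η+1)) ℝ :=
    Matrix.of (fun (i : Fin (η+1)) (j : Fin (η+1)) => x j ^ (η - (i:ℕ))) with hWdef
  set A : Matrix (Fin (η+1)) (Fin (η+1)) ℝ :=
    Matrix.of (fun (i : Fin (η+1)) (j : Fin (η+1)) =>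
      (1 / ((η - (i:ℕ)).factorial : ℝ)) * (c ^ (j:ℕ) * W i j)) with hA
  have hvA : (fun (j : Fin (η+1)) (i : Fin (η+1)) =>
      c ^ (j:ℕ) * ((((j:ℕ):ℝ) + 1) * Δ) ^ (η - (i:ℕ)) / ((η - (i:ℕ)).factorial : ℝ))
      = fun j => Aᵀ j := by
    funext j i
    simp only [hA, hWdef, Matrix.transpose_apply, Matrix.of_apply, hx]
    ring
  rw [hvA, show (fun j => Aᵀ j) = A.col from rfl, Matrix.linearIndependent_cols_iff_isUnit,
    Matrix.isUnit_iff_isUnit_det, isUnit_iff_ne_zero]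
  have hWdet : W.det ≠ 0 := by
    have hsub : W = (vandermonde x)ᵀ.submatrix Fin.revPerm id := by
      funext i j
      simp only [hWdef, Matrix.of_apply, Matrix.submatrix_apply, Matrix.transpose_apply,
        Matrix.vandermonde_apply, id]
      congr 1
      rw [Fin.revPerm_apply, Fin.val_rev]
      omega
    rw [hsub, Matrix.det_permute, Matrix.det_transpose, Matrix.det_vandermonde]
    refine mul_ne_zero (by simp) ?_
    refine Finset.prod_ne_zero_iff.mpr fun i _ => Finset.prod_ne_zero_iff.mpr fun j hj => ?_
    rw [Finset.mem_Ioi] at hj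
    have hxlt : x i < x j := by
      refine mul_lt_mul_of_pos_right ?_ hΔ
      have : ((i:ℕ):ℝ) < ((j:ℕ):ℝ) := Nat.cast_lt.mpr hj
      linarith
    exact sub_ne_zero.mpr (ne_of_gt hxlt)
  rw [hA, show (of fun (i : Fin (η+1)) (j : Fin (η+1)) =>
      (1 / ((η - (i:ℕ)).factorial : ℝ)) * (c ^ (j:ℕ) * W i j)).det
      = (∏ i : Fin (η+1), (1 / ((η - (i:ℕ)).factorial : ℝ))) *
        Matrix.det (fun (i : Fin (η+1)) (j : Fin (η+1)) => c ^ (j:ℕ) * W i j) from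
    Matrix.det_mul_column _ (fun (i : Fin (η+1)) (j : Fin (η+1)) => c ^ (j:ℕ) * W i j)]
  have hrow : (Matrix.det fun (i : Fin (η+1)) (j : Fin (η+1)) => c ^ (j:ℕ) * W i j)
      = (∏ j : Fin (η+1), c ^ (j:ℕ)) * W.det :=
    Matrix.det_mul_row (fun j : Fin (η+1) => c ^ (j:ℕ)) W
  rw [hrow]
  refine mul_ne_zero ?_ (mul_ne_zero ?_ hWdet)
  · exact Finset.prod_ne_zero_iff.mpr fun i _ => by
      simp [Nat.factorial_ne_zero]
  · exact Finset.prod_ne_zero_iff.mpr fun i _ => pow_ne_zero _ hc0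
end

section
/- Let $\nu > 0$, $\Delta > 0$, $\eta \geq 0$, and consider the discrete linear control system $x(t+1) = M x(t) + b\, u(t+1)$ in $\mathbb{R}^{\eta+1}$, where $M = e^{A_\nu\Delta}$ (upper triangular with entries $e^{-\nu\Delta}\Delta^{j-i}/(j-i)!$ for $j\geq i$) and $b_i = \Delta^{\eta+1-i}/(\eta+1-i)!$. Then for any $x, y \in \mathbb{R}^{\eta+1}$ there exists a sequence of controls $u(1),\dots,u(\eta+1) \in \mathbb{R}$ such that starting from $x(0) = x$, one has $x(\eta+1) = y$. -/
open Real Matrix Finset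

section aux

lemma ctrl_binom_div (x y : ℝ) (n : ℕ) :
    ∑ a ∈ range (n+1), x^a / a.factorial * (y^(n-a) / (n-a).factorial)
      = (x+y)^n / n.factorial := by
  rw [add_pow, sum_div]
  refine sum_congr rfl fun a ha => ?_
  have ha' : a ≤ n := mem_range_succ_iff.mp ha
  rw [Nat.cast_choose ℝ ha']
  have h1 : (a.factorial : ℝ) ≠ 0 := Nat.cast_ne_zero.mpr a.factorial_ne_zero
  have h2 : ((n-a).factorial : ℝ) ≠ 0 := Nat.cast_ne_zero.mpr (n-a).factorial_ne_zero
  have h3 : (n.factorial : ℝ) ≠ 0 := Nat.cast_ne_zero.mpr n.factorial_ne_zero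
  field_simp

lemma ctrl_pow_mulVec (ν Δ : ℝ) (η : ℕ)
    (b : Fin (η + 1) → ℝ)
    (hb : ∀ i : Fin (η + 1), b i = Δ ^ (η - (i : ℕ)) / (η - (i : ℕ)).factorial)
    (M : Matrix (Fin (η + 1)) (Fin (η + 1)) ℝ)
    (hM : ∀ i j : Fin (η + 1), M i j =
      if (i : ℕ) ≤ (j : ℕ)
        then Real.exp (-ν * Δ) * Δ ^ ((j : ℕ) - (i : ℕ)) / ((j : ℕ) - (i : ℕ)).factorial
        else 0) :
    ∀ (k : ℕ) (i : Fin (η + 1)), ((M ^ k).mulVec b) i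
      = Real.exp (-((k : ℝ) * ν * Δ)) * (((k : ℝ) + 1) * Δ) ^ (η - (i : ℕ))
          / (η - (i : ℕ)).factorial := by
  intro k
  induction k with
  | zero =>
    intro i
    simp [Matrix.one_mulVec, hb i]
  | succ k ih =>
    intro i
    have hi : (i : ℕ) ≤ η := Nat.lt_succ_iff.mp i.isLt
    set n := η - (i : ℕ) with hn
    have h1 : ((M ^ (k+1)).mulVec b) i = (M.mulVec ((M ^ k).mulVec b)) i := by
      rw [Matrix.mulVec_mulVec, ← pow_succ']
    rw [h1]
    have h2 : (M.mulVec ((M ^ k).mulVec b)) i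
        = ∑ j ∈ range (η + 1),
          (if (i : ℕ) ≤ j then Real.exp (-ν * Δ) * Δ ^ (j - (i : ℕ)) / (j - (i : ℕ)).factorial else 0)
            * (Real.exp (-((k : ℝ) * ν * Δ)) * (((k : ℝ) + 1) * Δ) ^ (η - j) / (η - j).factorial) := by
      rw [Matrix.mulVec, dotProduct, ← Fin.sum_univ_eq_sum_range]
      exact sum_congr rfl fun j _ => by rw [hM i j, ih j]
    rw [h2]
    rw [range_eq_Ico, ← sum_Ico_consecutive _ (Nat.zero_le (i : ℕ)) (by omega : (i : ℕ) ≤ η + 1)]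
    have hz : ∑ j ∈ Ico 0 (i : ℕ),
        (if (i : ℕ) ≤ j then Real.exp (-ν * Δ) * Δ ^ (j - (i : ℕ)) / (j - (i : ℕ)).factorial else 0)
          * (Real.exp (-((k : ℝ) * ν * Δ)) * (((k : ℝ) + 1) * Δ) ^ (η - j) / (η - j).factorial) = 0 := by
      refine sum_eq_zero fun j hj => ?_
      rw [mem_Ico] at hj
      rw [if_neg (by omega), zero_mul]
    rw [hz, zero_add, sum_Ico_eq_sum_range]
    have hrange : η + 1 - (i : ℕ) = n + 1 := by omega
    rw [hrange]
    have h3 : ∀ a ∈ range (n + 1),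
        (if (i : ℕ) ≤ (i : ℕ) + a then Real.exp (-ν * Δ) * Δ ^ ((i : ℕ) + a - (i : ℕ)) / ((i : ℕ) + a - (i : ℕ)).factorial else 0)
          * (Real.exp (-((k : ℝ) * ν * Δ)) * (((k : ℝ) + 1) * Δ) ^ (η - ((i : ℕ) + a)) / (η - ((i : ℕ) + a)).factorial)
        = (Real.exp (-ν * Δ) * Real.exp (-((k : ℝ) * ν * Δ)))
            * (Δ ^ a / a.factorial * ((((k : ℝ) + 1) * Δ) ^ (n - a) / (n - a).factorial)) := by
      intro a _
      rw [if_pos (Nat.le_add_right _ _)]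
      have e1 : (i : ℕ) + a - (i : ℕ) = a := by omega
      have e2 : η - ((i : ℕ) + a) = n - a := by omega
      rw [e1, e2]
      ring
    rw [sum_congr rfl h3, ← mul_sum, ctrl_binom_div]
    have e4 : Δ + ((k : ℝ) + 1) * Δ = ((((k:ℕ) + 1 : ℕ) : ℝ) + 1) * Δ := by push_cast; ring
    have e5 : -ν * Δ + -((k : ℝ) * ν * Δ) = -((((k:ℕ) + 1 : ℕ) : ℝ) * ν * Δ) := by push_cast; ring
    rw [← Real.exp_add, e4, e5, mul_div_assoc]

lemma ctrl_det_ne (η : ℕ) (Δ : ℝ) (hΔ : 0 < Δ) :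
    (Matrix.of fun (i k : Fin (η+1)) => ((((k:ℕ):ℝ) + 1) * Δ) ^ (η - (i:ℕ))).det ≠ 0 := by
  set xs : Fin (η+1) → ℝ := fun k => (((k:ℕ):ℝ) + 1) * Δ with hxs
  have hV : (Matrix.of fun (i k : Fin (η+1)) => ((((k:ℕ):ℝ) + 1) * Δ) ^ (η - (i:ℕ)))
      = ((Matrix.vandermonde xs)ᵀ).submatrix (Fin.revPerm : Equiv.Perm (Fin (η+1))) id := by
    ext i k
    simp only [Matrix.of_apply, Matrix.submatrix_apply, Matrix.transpose_apply,
      Matrix.vandermonde, id, Equiv.coe_fn_mk, Fin.revPerm_apply, Matrix.of_apply]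
    have hrev : (Fin.rev i : ℕ) = η - (i:ℕ) := by rw [Fin.val_rev]; omega
    rw [hrev]
  rw [hV, Matrix.det_permute, Matrix.det_transpose, Matrix.det_vandermonde]
  have hprod : ∏ i : Fin (η+1), ∏ j ∈ Finset.Ioi i, (xs j - xs i) ≠ 0 := by
    rw [Finset.prod_ne_zero_iff]
    intro i _
    rw [Finset.prod_ne_zero_iff]
    intro j hj
    rw [Finset.mem_Ioi] at hj
    have h1 : (i:ℕ) < (j:ℕ) := hj
    have h2 : xs i < xs j := by
      simp only [hxs]
      have : ((i:ℕ):ℝ) < ((j:ℕ):ℝ) := by exact_mod_cast h1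
      nlinarith
    linarith
  rcases Int.units_eq_one_or (Equiv.Perm.sign (Fin.revPerm : Equiv.Perm (Fin (η+1)))) with h | h <;>
    rw [h] <;> simp [hprod]

end aux

theorem discrete_exact_controllability (ν Δ : ℝ) (hν : 0 < ν) (hΔ : 0 < Δ) (η : ℕ)
    (b : Fin (η + 1) → ℝ)
    (hb : ∀ i : Fin (η + 1), b i = Δ ^ (η - (i : ℕ)) / (η - (i : ℕ)).factorial)
    (M : Matrix (Fin (η + 1)) (Fin (η + 1)) ℝ)
    (hM : ∀ i j : Fin (η + 1), M i j =
      if (i : ℕ) ≤ (j : ℕ)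
        then Real.exp (-ν * Δ) * Δ ^ ((j : ℕ) - (i : ℕ)) / ((j : ℕ) - (i : ℕ)).factorial
        else 0)
    (x y : Fin (η + 1) → ℝ) :
    ∃ u : ℕ → ℝ, ∃ traj : ℕ → Fin (η + 1) → ℝ,
      traj 0 = x ∧
      (∀ t : ℕ, traj (t + 1) = M.mulVec (traj t) + u (t + 1) • b) ∧
      traj (η + 1) = y := by
  have hv := ctrl_pow_mulVec ν Δ η b hb M hM
  -- the controllability matrix
  set V : Matrix (Fin (η+1)) (Fin (η+1)) ℝ :=
    Matrix.of fun (i k : Fin (η+1)) => ((((k:ℕ):ℝ) + 1) * Δ) ^ (η - (i:ℕ)) with hVdef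
  set D1 : Matrix (Fin (η+1)) (Fin (η+1)) ℝ :=
    Matrix.diagonal (fun i : Fin (η+1) => (1:ℝ) / ((η - (i:ℕ)).factorial : ℝ)) with hD1
  set D2 : Matrix (Fin (η+1)) (Fin (η+1)) ℝ :=
    Matrix.diagonal (fun k : Fin (η+1) => Real.exp (-(((k:ℕ):ℝ) * ν * Δ))) with hD2
  set C : Matrix (Fin (η+1)) (Fin (η+1)) ℝ := D1 * V * D2 with hCdef
  have hC : ∀ i k : Fin (η+1), C i k = ((M ^ (k:ℕ)).mulVec b) i := by
    intro i k
    rw [hv (k:ℕ) i]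
    rw [hCdef, hD1, hD2, hVdef, Matrix.mul_diagonal, Matrix.diagonal_mul, Matrix.of_apply]
    ring
  have hdet : C.det ≠ 0 := by
    rw [hCdef, Matrix.det_mul, Matrix.det_mul, Matrix.det_diagonal, Matrix.det_diagonal]
    refine mul_ne_zero (mul_ne_zero ?_ (ctrl_det_ne η Δ hΔ)) ?_
    · rw [Finset.prod_ne_zero_iff]
      intro i _
      have : ((η - (i:ℕ)).factorial : ℝ) ≠ 0 := Nat.cast_ne_zero.mpr (Nat.factorial_ne_zero _)
      positivity
    · rw [Finset.prod_ne_zero_iff]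
      intro k _
      exact (Real.exp_pos _).ne'
  set w : Fin (η+1) → ℝ := y - (M ^ (η+1)).mulVec x with hw
  set c : Fin (η+1) → ℝ := C⁻¹.mulVec w with hc
  have hsolve : C.mulVec c = w := by
    rw [hc, Matrix.mulVec_mulVec, Matrix.mul_nonsing_inv _ (Ne.isUnit hdet), Matrix.one_mulVec]
  set u : ℕ → ℝ := fun t => if h : 1 ≤ t ∧ t ≤ η + 1 then c ⟨η + 1 - t, by omega⟩ else 0 with hu
  refine ⟨u, fun nn => (M ^ nn).mulVec x + ∑ k ∈ range nn, u (nn - k) • (M ^ k).mulVec b,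
    ?_, ?_, ?_⟩
  · show (M ^ 0).mulVec x + ∑ k ∈ range 0, u (0 - k) • (M ^ k).mulVec b = x
    simp [Matrix.one_mulVec]
  · intro t
    show (M ^ (t+1)).mulVec x + ∑ k ∈ range (t+1), u (t + 1 - k) • (M ^ k).mulVec b
      = M.mulVec ((M ^ t).mulVec x + ∑ k ∈ range t, u (t - k) • (M ^ k).mulVec b) + u (t+1) • b
    rw [Matrix.mulVec_add]
    have hms : M.mulVec (∑ k ∈ range t, u (t - k) • (M ^ k).mulVec b)
        = ∑ k ∈ range t, u (t - k) • (M ^ (k+1)).mulVec b := by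
      have := map_sum M.mulVecLin (fun k => u (t - k) • (M ^ k).mulVec b) (range t)
      simp only [Matrix.mulVecLin_apply] at this
      rw [this]
      refine sum_congr rfl fun k _ => ?_
      rw [Matrix.mulVec_smul, Matrix.mulVec_mulVec, ← pow_succ']
    rw [hms, sum_range_succ']
    simp only [Nat.sub_zero, pow_zero, Matrix.one_mulVec, Nat.succ_sub_succ_eq_sub]
    rw [Matrix.mulVec_mulVec, ← pow_succ']
    abel
  · show (M ^ (η+1)).mulVec x + ∑ k ∈ range (η+1), u (η + 1 - k) • (M ^ k).mulVec b = y
    have hfin : ∑ k ∈ range (η+1), u (η + 1 - k) • (M ^ k).mulVec b = C.mulVec c := by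
      funext i
      rw [Finset.sum_apply]
      rw [Matrix.mulVec, dotProduct]
      rw [← Fin.sum_univ_eq_sum_range (fun k => (u (η + 1 - k) • (M ^ k).mulVec b) i) (η+1)]
      refine sum_congr rfl fun k _ => ?_
      have hk : (k:ℕ) ≤ η := Nat.lt_succ_iff.mp k.isLt
      have hut : u (η + 1 - (k:ℕ)) = c k := by
        simp only [hu]
        rw [dif_pos (by omega : 1 ≤ η + 1 - (k:ℕ) ∧ η + 1 - (k:ℕ) ≤ η + 1)]
        congr 1
        apply Fin.ext
        show η + 1 - (η + 1 - (k:ℕ)) = (k:ℕ)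
        omega
      rw [Pi.smul_apply, hut, hC i k, smul_eq_mul, mul_comm]
    rw [hfin, hsolve, hw]
    abel
end

section
/- Let $\nu > 0$ and $\eta \geq 0$ an integer. Then $\max\{0, \max_{j=1,\dots,\eta+1}\{x_j/\nu^{j-1}\}\}$ dominates $\sup_{t\geq 0} e^{-\nu t}\sum_{j=1}^{\eta+1}\frac{t^{j-1}}{(j-1)!}x_j$, and this bound is at most $e\max\{1,(\eta/(e\nu))^{\eta}\}\max_j |x_j|$ whenever all $x_j \geq 0$, i.e., the bound $\max_j\max\{0, x_j/\nu^{j-1}\}$ is no larger than the bound $e \max\{1,(\eta/(e\nu))^\eta\}\max_j x_j$ for $x$ with nonnegative coordinates. -/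
open Real Finset

theorem intensity_bounds_comparison (ν : ℝ) (hν : 0 < ν) (η : ℕ) (x : Fin (η + 1) → ℝ) :
    (∀ t : ℝ, 0 ≤ t →
      Real.exp (-ν * t) * ∑ j : Fin (η + 1), t ^ (j : ℕ) / (j : ℕ).factorial * x j ≤
        max 0 (Finset.univ.sup' Finset.univ_nonempty
          (fun j : Fin (η + 1) => x j / ν ^ (j : ℕ)))) ∧
    ((∀ j : Fin (η + 1), 0 ≤ x j) →
      max 0 (Finset.univ.sup' Finset.univ_nonempty
          (fun j : Fin (η + 1) => x j / ν ^ (j : ℕ))) ≤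
        Real.exp 1 * max 1 ((η / (Real.exp 1 * ν)) ^ η) *
          Finset.univ.sup' Finset.univ_nonempty x) := by
  set M : ℝ := max 0 (Finset.univ.sup' Finset.univ_nonempty
      (fun j : Fin (η + 1) => x j / ν ^ (j : ℕ))) with hM
  have hM0 : 0 ≤ M := le_max_left _ _
  constructor
  · intro t ht
    have key : ∀ j : Fin (η + 1), t ^ (j : ℕ) / (j : ℕ).factorial * x j ≤
        M * ((ν * t) ^ (j : ℕ) / (j : ℕ).factorial) := by
      intro j
      have hx : x j ≤ M * ν ^ (j : ℕ) := by
        have h1 : x j / ν ^ (j : ℕ) ≤ M :=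
          le_trans (Finset.le_sup' (fun j : Fin (η+1) => x j / ν ^ (j:ℕ)) (Finset.mem_univ j)) (le_max_right _ _)
        have hpow : (0:ℝ) < ν ^ (j : ℕ) := pow_pos hν _
        calc x j = x j / ν ^ (j : ℕ) * ν ^ (j : ℕ) := by field_simp
          _ ≤ M * ν ^ (j : ℕ) := by
            exact mul_le_mul_of_nonneg_right h1 hpow.le
      have hnn : (0:ℝ) ≤ t ^ (j : ℕ) / (j : ℕ).factorial :=
        div_nonneg (pow_nonneg ht _) (Nat.cast_nonneg _)
      calc t ^ (j : ℕ) / (j : ℕ).factorial * x j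
          ≤ t ^ (j : ℕ) / (j : ℕ).factorial * (M * ν ^ (j : ℕ)) :=
            mul_le_mul_of_nonneg_left hx hnn
        _ = M * ((ν * t) ^ (j : ℕ) / (j : ℕ).factorial) := by
            rw [mul_pow]; ring
    have hsum : ∑ j : Fin (η + 1), t ^ (j : ℕ) / (j : ℕ).factorial * x j ≤
        M * ∑ j : Fin (η + 1), (ν * t) ^ (j : ℕ) / (j : ℕ).factorial := by
      rw [Finset.mul_sum]
      exact Finset.sum_le_sum fun j _ => key j
    have hexp : ∑ j : Fin (η + 1), (ν * t) ^ (j : ℕ) / (j : ℕ).factorial ≤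
        Real.exp (ν * t) := by
      rw [Fin.sum_univ_eq_sum_range (fun j => (ν * t) ^ j / (j : ℕ).factorial)]
      exact Real.sum_le_exp_of_nonneg (mul_nonneg hν.le ht) _
    calc Real.exp (-ν * t) * ∑ j : Fin (η + 1), t ^ (j : ℕ) / (j : ℕ).factorial * x j
        ≤ Real.exp (-ν * t) * (M * Real.exp (ν * t)) := by
          apply mul_le_mul_of_nonneg_left _ (Real.exp_pos _).le
          exact le_trans hsum (mul_le_mul_of_nonneg_left hexp hM0)
      _ = M := by
          rw [← mul_assoc, mul_comm (Real.exp (-ν * t)) M, mul_assoc,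
            ← Real.exp_add]
          ring_nf
          rw [Real.exp_zero, mul_one]
  · intro hx
    set X : ℝ := Finset.univ.sup' Finset.univ_nonempty x with hX
    have hX0 : 0 ≤ X := le_trans (hx 0) (Finset.le_sup' x (Finset.mem_univ 0))
    set C : ℝ := Real.exp 1 * max 1 ((η / (Real.exp 1 * ν)) ^ η) with hC
    have hC1 : (1:ℝ) ≤ C := by
      calc (1:ℝ) = 1 * 1 := (one_mul 1).symm
        _ ≤ Real.exp 1 * max 1 ((η / (Real.exp 1 * ν)) ^ η) := by
            apply mul_le_mul _ (le_max_left _ _) zero_le_one (Real.exp_pos 1).le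
            linarith [Real.add_one_le_exp (1:ℝ)]
    have hCpos : 0 ≤ C := le_trans zero_le_one hC1
    have hinv : ∀ j : Fin (η + 1), 1 / ν ^ (j : ℕ) ≤ C := by
      intro j
      rcases le_or_gt 1 ν with hν1 | hν1
      · have h1 : (1:ℝ) ≤ ν ^ (j : ℕ) := one_le_pow₀ hν1
        calc 1 / ν ^ (j : ℕ) ≤ 1 := by
              rw [div_le_one (lt_of_lt_of_le zero_lt_one h1)]; exact h1
          _ ≤ C := hC1
      · rcases Nat.eq_zero_or_pos η with hη0 | hη1
        · have hj : (j : ℕ) = 0 := by omega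
          rw [hj, pow_zero, div_one]
          exact hC1
        · have hstep1 : 1 / ν ^ (j : ℕ) ≤ 1 / ν ^ η := by
            apply one_div_le_one_div_of_le (pow_pos hν η)
            exact pow_le_pow_of_le_one hν.le hν1.le j.is_le
          have hηpos : (0:ℝ) < (η : ℝ) := by exact_mod_cast hη1
          have hlog : (η : ℝ) - 1 ≤ (η : ℝ) * Real.log η := by
            have h2 : Real.log ((η:ℝ)⁻¹) ≤ (η:ℝ)⁻¹ - 1 :=
              Real.log_le_sub_one_of_pos (by positivity)
            rw [Real.log_inv] at h2
            have h3 : 1 - (η:ℝ)⁻¹ ≤ Real.log η := by linarith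
            have h4 : (1 - (η:ℝ)⁻¹) * η ≤ Real.log η * η :=
              mul_le_mul_of_nonneg_right h3 hηpos.le
            calc (η:ℝ) - 1 = (1 - (η:ℝ)⁻¹) * η := by field_simp
              _ ≤ Real.log η * η := h4
              _ = (η:ℝ) * Real.log η := mul_comm _ _
          have hkey : Real.exp η ≤ Real.exp 1 * (η:ℝ) ^ η := by
            have h5 : ((η:ℝ):ℝ) ^ η = Real.exp ((η:ℝ) * Real.log η) := by
              rw [Real.exp_nat_mul, Real.exp_log hηpos]
            rw [h5, ← Real.exp_add]
            apply Real.exp_le_exp.2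
            linarith
          have hexppow : (Real.exp 1) ^ η = Real.exp η := by
            rw [← Real.exp_nat_mul, mul_one]
          have hνη : (0:ℝ) < ν ^ η := pow_pos hν η
          have hfrac : 1 / ν ^ η ≤ Real.exp 1 * ((η:ℝ) / (Real.exp 1 * ν)) ^ η := by
            have heq : Real.exp 1 * ((η:ℝ) / (Real.exp 1 * ν)) ^ η =
                (Real.exp 1 * (η:ℝ) ^ η) / (Real.exp η * ν ^ η) := by
              rw [div_pow, mul_pow, hexppow]; ring
            rw [heq, div_le_div_iff₀ hνη (by positivity)]
            nlinarith [hνη, hkey]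
          calc 1 / ν ^ (j : ℕ) ≤ 1 / ν ^ η := hstep1
            _ ≤ Real.exp 1 * ((η:ℝ) / (Real.exp 1 * ν)) ^ η := hfrac
            _ ≤ C := by
                apply mul_le_mul_of_nonneg_left (le_max_right _ _) (Real.exp_pos 1).le
    apply max_le
    · exact mul_nonneg hCpos hX0
    · apply Finset.sup'_le
      intro j _
      calc x j / ν ^ (j : ℕ) = x j * (1 / ν ^ (j : ℕ)) := by ring
        _ ≤ X * C := mul_le_mul (Finset.le_sup' x (Finset.mem_univ j)) (hinv j)
            (by positivity) hX0
        _ = C * X := mul_comm _ _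
end

section
/- Let $B$ be a standard one-dimensional Brownian motion and $T = 1$. Then the random variable $M := \sup_{0 \le s < t \le 1} \frac{|B_t - B_s|}{\sqrt{(t-s)(1 + \log(1/(t-s)))}}$ is almost surely finite, and moreover there exists $\alpha > 0$ such that $\mathbb{E}[e^{\alpha M^2}] < \infty$. -/
open MeasureTheory ProbabilityTheory Real NNReal
open scoped ENNReal



lemma exp_mul_gaussianPDFReal (v : ℝ≥0) (hv : v ≠ 0) (t : ℝ) (x : ℝ) :
    Real.exp (t * x) * gaussianPDFReal 0 v x
      = Real.exp (t^2 * v / 2) * gaussianPDFReal (t * v) v x := by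
  have hv' : (0:ℝ) < v := by positivity
  simp only [gaussianPDFReal, sub_zero]
  rw [mul_left_comm, mul_left_comm (Real.exp (t^2*v/2)), ← Real.exp_add, ← Real.exp_add]
  congr 2
  field_simp
  ring

lemma integrable_exp_mul_gaussianPDFReal (v : ℝ≥0) (hv : v ≠ 0) (t : ℝ) :
    Integrable (fun x => gaussianPDFReal 0 v x * Real.exp (t * x)) := by
  have : (fun x => gaussianPDFReal 0 v x * Real.exp (t * x))
      = fun x => Real.exp (t^2 * v / 2) * gaussianPDFReal (t * v) v x := by
    funext x
    rw [mul_comm, exp_mul_gaussianPDFReal v hv]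
  rw [this]
  exact (integrable_gaussianPDFReal (t * v) v).const_mul _

lemma gaussianReal_eq_withDensity (v : ℝ≥0) (hv : v ≠ 0) :
    gaussianReal 0 v
      = volume.withDensity (fun x => ((gaussianPDFReal 0 v x).toNNReal : ENNReal)) := by
  rw [gaussianReal_of_var_ne_zero _ hv]
  rfl

lemma integrable_exp_gaussianReal (v : ℝ≥0) (hv : v ≠ 0) (t : ℝ) :
    Integrable (fun x => Real.exp (t * x)) (gaussianReal 0 v) := by
  rw [gaussianReal_eq_withDensity v hv,
    integrable_withDensity_iff_integrable_smul (measurable_gaussianPDFReal 0 v).real_toNNReal]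
  have : (fun x => (gaussianPDFReal 0 v x).toNNReal • Real.exp (t * x))
      = fun x => gaussianPDFReal 0 v x * Real.exp (t * x) := by
    funext x
    rw [NNReal.smul_def, smul_eq_mul, Real.coe_toNNReal _ (gaussianPDFReal_nonneg 0 v x)]
  rw [this]
  exact integrable_exp_mul_gaussianPDFReal v hv t

lemma mgf_id_gaussianReal (v : ℝ≥0) (hv : v ≠ 0) (t : ℝ) :
    mgf id (gaussianReal 0 v) t = Real.exp (t^2 * v / 2) := by
  rw [mgf]
  rw [gaussianReal_eq_withDensity v hv,
    integral_withDensity_eq_integral_smul (measurable_gaussianPDFReal 0 v).real_toNNReal]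
  have : (fun x => (gaussianPDFReal 0 v x).toNNReal • Real.exp (t * id x))
      = fun x => Real.exp (t^2 * v / 2) * gaussianPDFReal (t * v) v x := by
    funext x
    rw [NNReal.smul_def, smul_eq_mul, Real.coe_toNNReal _ (gaussianPDFReal_nonneg 0 v x), id_eq, mul_comm,
      exp_mul_gaussianPDFReal v hv]
  rw [this, integral_const_mul, integral_gaussianPDFReal_eq_one (t*v) hv, mul_one]

lemma gaussianReal_tail (v : ℝ≥0) (hv : v ≠ 0) (y : ℝ) (hy : 0 ≤ y) :
    gaussianReal 0 v {z : ℝ | y ≤ z} ≤ ENNReal.ofReal (Real.exp (-y^2 / (2*v))) := by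
  have hv' : (0:ℝ) < v := by positivity
  have ht : (0:ℝ) ≤ y / v := by positivity
  have h := measure_ge_le_exp_mul_mgf (μ := gaussianReal 0 v) (X := id) y ht
    (integrable_exp_gaussianReal v hv _)
  rw [mgf_id_gaussianReal v hv] at h
  have hfin : gaussianReal 0 v {z : ℝ | y ≤ id z} ≠ ⊤ := measure_ne_top _ _
  calc gaussianReal 0 v {z : ℝ | y ≤ z}
      = ENNReal.ofReal ((gaussianReal 0 v {z : ℝ | y ≤ id z}).toReal) := by
        rw [ENNReal.ofReal_toReal hfin]; rfl
    _ ≤ ENNReal.ofReal (Real.exp (-(y/v) * y) * Real.exp ((y/v)^2 * v / 2)) :=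
        ENNReal.ofReal_le_ofReal h
    _ = ENNReal.ofReal (Real.exp (-y^2 / (2*v))) := by
        rw [← Real.exp_add]
        congr 1
        field_simp
        ring

lemma gaussianReal_map_neg (v : ℝ≥0) :
    (gaussianReal 0 v).map (fun z : ℝ => -z) = gaussianReal 0 v := by
  have h := gaussianReal_map_const_mul (μ := 0) (v := v) (-1)
  simp only [neg_one_mul, mul_zero] at h
  rw [h]
  congr 1
  ext
  simp

lemma gaussianReal_abs_tail (v : ℝ≥0) (hv : v ≠ 0) (y : ℝ) (hy : 0 ≤ y) :
    gaussianReal 0 v {z : ℝ | y < |z|} ≤ ENNReal.ofReal (2 * Real.exp (-y^2 / (2*v))) := by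
  have hsub : {z : ℝ | y < |z|} ⊆ {z : ℝ | y ≤ z} ∪ ((fun z : ℝ => -z) ⁻¹' {z : ℝ | y ≤ z}) := by
    intro z hz
    simp only [Set.mem_setOf_eq] at hz
    rcases le_or_gt 0 z with h | h
    · left; simp only [Set.mem_setOf_eq]; rw [abs_of_nonneg h] at hz; exact hz.le
    · right; simp only [Set.mem_preimage, Set.mem_setOf_eq]; rw [abs_of_neg h] at hz; exact hz.le
  have hms : MeasurableSet {z : ℝ | y ≤ z} := measurableSet_Ici
  calc gaussianReal 0 v {z : ℝ | y < |z|}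
      ≤ gaussianReal 0 v ({z : ℝ | y ≤ z} ∪ ((fun z : ℝ => -z) ⁻¹' {z : ℝ | y ≤ z})) :=
        measure_mono hsub
    _ ≤ gaussianReal 0 v {z : ℝ | y ≤ z}
          + gaussianReal 0 v ((fun z : ℝ => -z) ⁻¹' {z : ℝ | y ≤ z}) := measure_union_le _ _
    _ = gaussianReal 0 v {z : ℝ | y ≤ z}
          + (gaussianReal 0 v).map (fun z : ℝ => -z) {z : ℝ | y ≤ z} := by
        rw [Measure.map_apply measurable_neg hms]
    _ ≤ ENNReal.ofReal (Real.exp (-y^2 / (2*v))) + ENNReal.ofReal (Real.exp (-y^2 / (2*v))) := by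
        rw [_root_.gaussianReal_map_neg]
        exact add_le_add (gaussianReal_tail v hv y hy) (gaussianReal_tail v hv y hy)
    _ = ENNReal.ofReal (2 * Real.exp (-y^2 / (2*v))) := by
        rw [← ENNReal.ofReal_add (by positivity) (by positivity)]
        ring_nf



noncomputable def dyA (n : ℕ) : ℝ := Real.sqrt ((n + 1) / 2 ^ n)

lemma dyA_pos (n : ℕ) : 0 < dyA n := Real.sqrt_pos.mpr (by positivity)

lemma dyA_sq (n : ℕ) : dyA n ^ 2 = (n + 1) / 2 ^ n := Real.sq_sqrt (by positivity)

lemma dyA_antitone (n : ℕ) : dyA (n + 1) ≤ dyA n := by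
  apply Real.sqrt_le_sqrt
  rw [div_le_div_iff₀ (by positivity) (by positivity)]
  push_cast
  ring_nf
  nlinarith [pow_pos (show (0:ℝ) < 2 by norm_num) n]

lemma aux_geom (j : ℕ) : (j + 1 : ℝ) ≤ 2 * (3/2) ^ j := by
  induction j with
  | zero => norm_num
  | succ k ih =>
    have h : (1:ℝ) ≤ (3/2)^k := one_le_pow₀ (by norm_num)
    push_cast
    push_cast at ih
    rw [pow_succ]
    nlinarith

lemma dyA_zero : dyA 0 = 1 := by
  rw [dyA]
  norm_num

lemma dyA_add_le (n j : ℕ) : dyA (n + j) ≤ Real.sqrt 2 * (Real.sqrt 3 / 2) ^ j * dyA n := by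
  have hq : (Real.sqrt 3 / 2) ^ 2 = 3 / 4 := by
    rw [div_pow, Real.sq_sqrt (by norm_num : (0:ℝ) ≤ 3)]; norm_num
  have key : ((n + j : ℕ) + 1 : ℝ) / 2 ^ (n + j) ≤ 2 * (3/4) ^ j * ((n + 1) / 2 ^ n) := by
    rw [pow_add, div_le_iff₀ (by positivity)]
    have h1 : ((n + j : ℕ) + 1 : ℝ) ≤ (j + 1) * (n + 1) := by
      push_cast; nlinarith [j.cast_nonneg (α := ℝ), n.cast_nonneg (α := ℝ)]
    have h2 : (j + 1 : ℝ) ≤ 2 * (3/2) ^ j := aux_geom j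
    have h3 : ((3:ℝ)/4) ^ j * 2 ^ j = (3/2) ^ j := by
      rw [← mul_pow]; norm_num
    have h4 : ((n + 1 : ℝ)/2^n) * (2^n * 2^j) = (n+1) * 2^j := by
      field_simp
    calc ((n + j : ℕ) + 1 : ℝ) ≤ (j + 1) * (n + 1) := h1
      _ ≤ 2 * (3/2) ^ j * (n + 1) := by nlinarith [n.cast_nonneg (α := ℝ)]
      _ = 2 * ((3/4) ^ j * 2 ^ j) * (n + 1) := by rw [h3]
      _ = 2 * (3/4) ^ j * ((n + 1) / 2 ^ n) * (2 ^ n * 2 ^ j) := by rw [mul_comm (2^n : ℝ) _, ← mul_assoc]; field_simp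
  have h5 := Real.sqrt_le_sqrt key
  rw [dyA]
  refine h5.trans (le_of_eq ?_)
  rw [show (2 : ℝ) * (3/4) ^ j * ((n + 1) / 2 ^ n)
      = 2 * ((Real.sqrt 3 / 2) ^ 2) ^ j * ((n+1)/2^n) by rw [hq],
    ← pow_mul, mul_comm 2 j, pow_mul]
  rw [Real.sqrt_mul (by positivity), Real.sqrt_mul (by positivity), Real.sqrt_sq (by positivity),
    dyA]

lemma summable_dyA : Summable dyA := by
  have hb : ∀ n, dyA n ≤ Real.sqrt 2 * (Real.sqrt 3 / 2) ^ n * 1 := fun n => by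
    have := dyA_add_le 0 n
    rwa [zero_add, dyA_zero] at this
  refine Summable.of_nonneg_of_le (fun n => (dyA_pos n).le) hb ?_
  apply Summable.mul_right
  apply Summable.mul_left
  apply summable_geometric_of_lt_one (by positivity)
  rw [div_lt_one (by norm_num)]
  nlinarith [Real.sq_sqrt (show (0:ℝ) ≤ 3 by norm_num), Real.sqrt_nonneg 3]

lemma tsum_dyA_le (n : ℕ) : ∑' j, dyA (n + j) ≤ 11 * dyA n := by
  have hq0 : (0:ℝ) ≤ Real.sqrt 3 / 2 := by positivity
  have hq1 : Real.sqrt 3 / 2 < 1 := by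
    rw [div_lt_one (by norm_num)]
    nlinarith [Real.sq_sqrt (show (0:ℝ) ≤ 3 by norm_num), Real.sqrt_nonneg 3]
  have hsum : Summable (fun j => Real.sqrt 2 * (Real.sqrt 3 / 2) ^ j * dyA n) := by
    apply Summable.mul_right
    exact (summable_geometric_of_lt_one hq0 hq1).mul_left _
  calc ∑' j, dyA (n + j) ≤ ∑' j, Real.sqrt 2 * (Real.sqrt 3 / 2) ^ j * dyA n := by
        apply Summable.tsum_le_tsum (fun j => dyA_add_le n j) _ hsum
        exact ((_root_.summable_nat_add_iff n).mpr summable_dyA).congr (fun j => by rw [add_comm])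
    _ = Real.sqrt 2 * (1 - Real.sqrt 3 / 2)⁻¹ * dyA n := by
        rw [_root_.tsum_mul_right, _root_.tsum_mul_left, tsum_geometric_of_lt_one hq0 hq1]
    _ ≤ 11 * dyA n := by
        apply mul_le_mul_of_nonneg_right _ (dyA_pos n).le
        rw [mul_inv_le_iff₀ (by nlinarith)]
        nlinarith [Real.sq_sqrt (show (0:ℝ) ≤ 3 by norm_num), Real.sqrt_nonneg 3,
          Real.sq_sqrt (show (0:ℝ) ≤ 2 by norm_num), Real.sqrt_nonneg 2,
          sq_nonneg (Real.sqrt 3 - 1.7321), sq_nonneg (Real.sqrt 2 - 1.4143)]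

noncomputable def dyadicPt (u : ℝ) (i : ℕ) : ℝ := ⌊u * 2 ^ i⌋₊ / 2 ^ i

lemma dyadicPt_le {u : ℝ} (hu : 0 ≤ u) (i : ℕ) : dyadicPt u i ≤ u := by
  rw [dyadicPt, div_le_iff₀ (by positivity)]
  exact Nat.floor_le (by positivity)

lemma lt_dyadicPt_add {u : ℝ} (i : ℕ) : u < dyadicPt u i + (1/2) ^ i := by
  rw [dyadicPt]
  have h := Nat.lt_succ_floor (u * 2 ^ i)
  have h2 : u * 2 ^ i < ⌊u * 2 ^ i⌋₊ + 1 := by exact_mod_cast h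
  rw [div_add' _ _ _ (by positivity : (2:ℝ)^i ≠ 0), lt_div_iff₀ (by positivity)]
  calc u * 2 ^ i < ⌊u * 2 ^ i⌋₊ + 1 := h2
    _ = ⌊u * 2 ^ i⌋₊ + (1/2)^i * 2^i := by
      rw [one_div, inv_pow, inv_mul_cancel₀ (by positivity : ((2:ℝ)^i) ≠ 0)]

lemma tendsto_dyadicPt {u : ℝ} (hu : 0 ≤ u) :
    Filter.Tendsto (dyadicPt u) Filter.atTop (nhds u) := by
  have hlow : ∀ i, u - (1/2) ^ i ≤ dyadicPt u i := fun i =>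
    by linarith [lt_dyadicPt_add (u := u) i]
  have hhigh : ∀ i, dyadicPt u i ≤ u := dyadicPt_le hu
  have h1 : Filter.Tendsto (fun i : ℕ => u - (1/2) ^ i) Filter.atTop (nhds u) := by
    have := tendsto_pow_atTop_nhds_zero_of_lt_one (show (0:ℝ) ≤ 1/2 by norm_num)
      (show (1:ℝ)/2 < 1 by norm_num)
    simpa using (tendsto_const_nhds (x := u)).sub this
  exact tendsto_of_tendsto_of_tendsto_of_le_of_le h1 tendsto_const_nhds hlow hhigh

section Chaining

variable {f : ℝ → ℝ} {x : ℝ}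

lemma chaining_step (hx : 0 ≤ x)
    (hdy : ∀ n k : ℕ, k < 2 ^ n → |f ((k + 1) / 2 ^ n) - f (k / 2 ^ n)| ≤ x * dyA n)
    {u : ℝ} (hu0 : 0 ≤ u) (hu1 : u ≤ 1) (i : ℕ) :
    |f (dyadicPt u (i + 1)) - f (dyadicPt u i)| ≤ x * dyA (i + 1) := by
  set k := ⌊u * 2 ^ i⌋₊ with hk
  have hflow : (2 * k : ℝ) ≤ u * 2 ^ (i + 1) := by
    have := Nat.floor_le (show (0:ℝ) ≤ u * 2 ^ i by positivity)
    rw [pow_succ]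
    push_cast
    nlinarith
  have hfhigh : u * 2 ^ (i + 1) < 2 * k + 2 := by
    have h2 : u * 2 ^ i < (k:ℝ) + 1 := by
      have := Nat.lt_succ_floor (u * 2 ^ i)
      rw [hk]
      push_cast at this ⊢
      linarith
    rw [pow_succ]
    nlinarith
  have hcase : ⌊u * 2 ^ (i+1)⌋₊ = 2 * k ∨ ⌊u * 2 ^ (i+1)⌋₊ = 2 * k + 1 := by
    have hge : 2 * k ≤ ⌊u * 2 ^ (i+1)⌋₊ := Nat.le_floor (by push_cast; exact hflow)
    have hlt : ⌊u * 2 ^ (i+1)⌋₊ < 2 * k + 2 := by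
      rw [Nat.floor_lt (by positivity)]
      push_cast
      exact hfhigh
    omega
  rcases hcase with h | h
  · have : dyadicPt u (i+1) = dyadicPt u i := by
      rw [dyadicPt, dyadicPt, h]
      push_cast
      rw [pow_succ]
      field_simp
      ring
      rw [hk]
    rw [this, sub_self, abs_zero]
    exact mul_nonneg hx (dyA_pos _).le
  · have hklt : 2 * k < 2 ^ (i + 1) := by
      by_contra hcon
      push_neg at hcon
      have h4 : ((2 * k + 1 : ℕ) : ℝ) ≤ u * 2 ^ (i + 1) := by
        rw [← h]
        exact Nat.floor_le (by positivity)
      have h2 : u * 2 ^ (i+1) ≤ 2 ^ (i+1) := by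
        nlinarith [pow_pos (show (0:ℝ) < 2 by norm_num) (i+1)]
      have h3 : ((2 ^ (i+1) : ℕ) : ℝ) ≤ ((2 * k : ℕ) : ℝ) := Nat.cast_le.mpr hcon
      push_cast at h3 h4
      linarith
    have e1 : dyadicPt u i = (2 * k : ℕ) / 2 ^ (i+1) := by
      rw [dyadicPt]
      push_cast
      rw [pow_succ]
      field_simp
      ring
    have e2 : dyadicPt u (i+1) = ((2 * k : ℕ) + 1) / 2 ^ (i+1) := by
      rw [dyadicPt, h]
      push_cast
      ring
    rw [e1, e2]
    exact hdy (i+1) (2*k) hklt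

lemma chaining_telescope (hx : 0 ≤ x)
    (hdy : ∀ n k : ℕ, k < 2 ^ n → |f ((k + 1) / 2 ^ n) - f (k / 2 ^ n)| ≤ x * dyA n)
    {u : ℝ} (hu0 : 0 ≤ u) (hu1 : u ≤ 1) (m : ℕ) :
    ∀ i, |f (dyadicPt u (m + i)) - f (dyadicPt u m)| ≤ x * ∑ j ∈ Finset.range i, dyA (m + 1 + j) := by
  intro i
  induction i with
  | zero => simp
  | succ n ih =>
    have step := chaining_step hx hdy hu0 hu1 (m + n)
    calc |f (dyadicPt u (m + (n+1))) - f (dyadicPt u m)|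
        ≤ |f (dyadicPt u (m + n + 1)) - f (dyadicPt u (m + n))|
          + |f (dyadicPt u (m + n)) - f (dyadicPt u m)| := by
          rw [show m + (n+1) = m + n + 1 by ring]
          exact abs_sub_le _ _ _ |>.trans_eq rfl
      _ ≤ x * dyA (m + n + 1) + x * ∑ j ∈ Finset.range n, dyA (m + 1 + j) :=
          add_le_add step ih
      _ = x * ∑ j ∈ Finset.range (n+1), dyA (m + 1 + j) := by
          rw [Finset.sum_range_succ, mul_add, add_comm, show m + 1 + n = m + n + 1 by ring]

lemma chaining_approx (hf : Continuous f) (hx : 0 ≤ x)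
    (hdy : ∀ n k : ℕ, k < 2 ^ n → |f ((k + 1) / 2 ^ n) - f (k / 2 ^ n)| ≤ x * dyA n)
    {u : ℝ} (hu0 : 0 ≤ u) (hu1 : u ≤ 1) (m : ℕ) :
    |f u - f (dyadicPt u m)| ≤ x * ∑' j, dyA (m + 1 + j) := by
  have hsum : Summable (fun j => dyA (m + 1 + j)) :=
    ((_root_.summable_nat_add_iff (m+1)).mpr summable_dyA).congr (fun j => by rw [add_comm])
  have hten : Filter.Tendsto (fun i => |f (dyadicPt u (m + i)) - f (dyadicPt u m)|)
      Filter.atTop (nhds (|f u - f (dyadicPt u m)|)) := by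
    have h1 : Filter.Tendsto (fun i : ℕ => dyadicPt u (m + i)) Filter.atTop (nhds u) := by
      have := (tendsto_dyadicPt hu0).comp
        (Filter.tendsto_add_atTop_nat m)
      simpa [Function.comp_def, Nat.add_comm] using this
    have h2 : Filter.Tendsto (fun i : ℕ => f (dyadicPt u (m + i))) Filter.atTop (nhds (f u)) :=
      (hf.tendsto u).comp h1
    exact ((h2.sub tendsto_const_nhds).abs)
  apply le_of_tendsto hten
  filter_upwards with i
  calc |f (dyadicPt u (m + i)) - f (dyadicPt u m)|
      ≤ x * ∑ j ∈ Finset.range i, dyA (m + 1 + j) := chaining_telescope hx hdy hu0 hu1 m i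
    _ ≤ x * ∑' j, dyA (m + 1 + j) := by
        apply mul_le_mul_of_nonneg_left _ hx
        exact Summable.sum_le_tsum _ (fun j _ => (dyA_pos _).le) hsum

end Chaining

lemma chaining_main {f : ℝ → ℝ} {x : ℝ} (hf : Continuous f) (hx : 0 ≤ x)
    (hdy : ∀ n k : ℕ, k < 2 ^ n → |f ((k + 1) / 2 ^ n) - f (k / 2 ^ n)| ≤ x * dyA n)
    {s t : ℝ} (hs : 0 ≤ s) (hst : s < t) (ht : t ≤ 1) :
    |f t - f s| ≤ 46 * x * Real.sqrt ((t - s) * (1 + Real.log (1 / (t - s)))) := by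
  set δ := t - s with hδ
  have hδ0 : 0 < δ := by simp [hδ]; linarith
  have hδ1 : δ ≤ 1 := by simp [hδ]; linarith
  have hX1 : (1:ℝ) ≤ 1/δ := by rw [le_div_iff₀ hδ0]; linarith
  have hL0 : 0 ≤ Real.log (1/δ) := Real.log_nonneg hX1
  set L := Real.log (1/δ) with hLdef
  set n0 := ⌊Real.logb 2 (1/δ)⌋₊ with hn0
  have hlogb0 : 0 ≤ Real.logb 2 (1/δ) := Real.logb_nonneg one_lt_two hX1
  -- 2 ^ n0 ≤ 1/δ
  have hpow_le : (2:ℝ) ^ n0 ≤ 1/δ := by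
    have h1 : (n0 : ℝ) ≤ Real.logb 2 (1/δ) := Nat.floor_le hlogb0
    calc (2:ℝ) ^ n0 = (2:ℝ) ^ (n0 : ℝ) := by rw [Real.rpow_natCast]
      _ ≤ (2:ℝ) ^ (Real.logb 2 (1/δ)) := Real.rpow_le_rpow_of_exponent_le one_le_two h1
      _ = 1/δ := Real.rpow_logb two_pos (by norm_num) (by positivity)
  have h1 : δ * 2 ^ n0 ≤ 1 := by
    rw [mul_comm, ← le_div_iff₀ hδ0]
    simpa using hpow_le
  -- 1 / 2 ^ n0 ≤ 2 δ
  have h2 : (1:ℝ) / 2 ^ n0 ≤ 2 * δ := by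
    have hlt : Real.logb 2 (1/δ) < n0 + 1 := Nat.lt_floor_add_one _
    have : (1:ℝ)/δ < (2:ℝ) ^ ((n0:ℝ) + 1) := by
      calc (1:ℝ)/δ = (2:ℝ) ^ (Real.logb 2 (1/δ)) :=
            (Real.rpow_logb two_pos (by norm_num) (by positivity)).symm
        _ < (2:ℝ) ^ ((n0:ℝ) + 1) := by
            apply Real.rpow_lt_rpow_of_exponent_lt one_lt_two hlt
    have h3 : (2:ℝ) ^ ((n0:ℝ) + 1) = 2 * 2 ^ n0 := by
      rw [show ((n0:ℝ) + 1) = ((n0 + 1 : ℕ) : ℝ) by push_cast; ring, Real.rpow_natCast, pow_succ]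
      ring
    rw [h3] at this
    have h4 := (div_lt_iff₀ hδ0).mp this
    rw [div_le_iff₀ (by positivity : (0:ℝ) < 2 ^ n0)]
    nlinarith
  -- n0 + 1 ≤ 2 (1 + L)
  have h3 : (n0 : ℝ) + 1 ≤ 2 * (1 + L) := by
    have ha : (n0 : ℝ) ≤ Real.logb 2 (1/δ) := Nat.floor_le hlogb0
    have hb : Real.logb 2 (1/δ) = L / Real.log 2 := by rw [Real.logb, hLdef]
    have hc : Real.log 2 > 0.6931471803 := Real.log_two_gt_d9
    have hd : L / Real.log 2 ≤ 2 * L := by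
      rw [div_le_iff₀ (by linarith)]
      nlinarith
    linarith [ha.trans (hb.le.trans hd)]
  -- dyA n0 ≤ 2 sqrt(δ (1+L))
  have hdyA : dyA n0 ≤ 2 * Real.sqrt (δ * (1 + L)) := by
    have key : ((n0:ℝ) + 1) / 2 ^ n0 ≤ 4 * (δ * (1 + L)) := by
      calc ((n0:ℝ) + 1) / 2 ^ n0 = ((n0:ℝ) + 1) * (1 / 2 ^ n0) := by ring
        _ ≤ (2 * (1 + L)) * (2 * δ) := by
            apply mul_le_mul h3 h2 (by positivity) (by positivity)
        _ = 4 * (δ * (1 + L)) := by ring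
    calc dyA n0 ≤ Real.sqrt (4 * (δ * (1 + L))) := Real.sqrt_le_sqrt key
      _ = 2 * Real.sqrt (δ * (1 + L)) := by
          rw [show (4:ℝ) = 2^2 by norm_num, Real.sqrt_mul (by positivity),
            Real.sqrt_sq (by norm_num)]
  -- middle term
  have hs1 : s < 1 := lt_of_lt_of_le hst ht
  have ht0 : 0 ≤ t := le_trans hs hst.le
  set ks := ⌊s * 2 ^ n0⌋₊ with hks
  set kt := ⌊t * 2 ^ n0⌋₊ with hkt
  have hkk : kt = ks ∨ kt = ks + 1 := by
    have hmono : ks ≤ kt := Nat.floor_le_floor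
      (mul_le_mul_of_nonneg_right hst.le (by positivity))
    have hup : (kt : ℝ) < (ks : ℝ) + 2 := by
      have hb : (kt:ℝ) ≤ t * 2 ^ n0 := Nat.floor_le (by positivity)
      have hc : s * 2 ^ n0 < (ks:ℝ) + 1 := by
        have := Nat.lt_succ_floor (s * 2 ^ n0)
        push_cast at this
        linarith
      have hd : t * 2 ^ n0 ≤ s * 2 ^ n0 + 1 := by nlinarith
      linarith
    have : kt < ks + 2 := by exact_mod_cast hup
    omega
  have hmid : |f (dyadicPt t n0) - f (dyadicPt s n0)| ≤ x * dyA n0 := by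
    rcases hkk with h | h
    · have : dyadicPt t n0 = dyadicPt s n0 := by rw [dyadicPt, dyadicPt, ← hks, ← hkt, h]
      rw [this, sub_self, abs_zero]
      exact mul_nonneg hx (dyA_pos _).le
    · have hkslt : ks < 2 ^ n0 := by
        rw [hks, Nat.floor_lt (by positivity)]
        push_cast
        nlinarith [pow_pos (show (0:ℝ) < 2 by norm_num) n0]
      have e1 : dyadicPt t n0 = ((ks:ℝ) + 1) / 2 ^ n0 := by
        rw [dyadicPt, ← hkt, h]
        push_cast
        ring
      have e2 : dyadicPt s n0 = (ks:ℝ) / 2 ^ n0 := by rw [dyadicPt, ← hks]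
      rw [e1, e2]
      exact hdy n0 ks hkslt
  -- tail sums
  have htail : x * ∑' j, dyA (n0 + 1 + j) ≤ x * (11 * dyA n0) := by
    apply mul_le_mul_of_nonneg_left _ hx
    calc ∑' j, dyA (n0 + 1 + j) ≤ 11 * dyA (n0 + 1) := tsum_dyA_le (n0 + 1)
      _ ≤ 11 * dyA n0 := by nlinarith [dyA_antitone n0]
  have hat := chaining_approx hf hx hdy ht0 ht n0
  have has := chaining_approx hf hx hdy hs (le_of_lt hs1) n0
  have tri : |f t - f s| ≤ |f t - f (dyadicPt t n0)| + |f (dyadicPt t n0) - f (dyadicPt s n0)|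
      + |f (dyadicPt s n0) - f s| := by
    have t1 := abs_sub_le (f t) (f (dyadicPt s n0)) (f s)
    have t2 := abs_sub_le (f t) (f (dyadicPt t n0)) (f (dyadicPt s n0))
    linarith
  calc |f t - f s| ≤ |f t - f (dyadicPt t n0)| + |f (dyadicPt t n0) - f (dyadicPt s n0)|
        + |f (dyadicPt s n0) - f s| := tri
    _ ≤ x * (11 * dyA n0) + x * dyA n0 + x * (11 * dyA n0) := by
        refine add_le_add (add_le_add (hat.trans htail) hmid) ?_
        rw [abs_sub_comm]
        exact has.trans htail
    _ = 23 * x * dyA n0 := by ring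
    _ ≤ 23 * x * (2 * Real.sqrt (δ * (1 + L))) := by
        apply mul_le_mul_of_nonneg_left hdyA (by positivity)
    _ = 46 * x * Real.sqrt (δ * (1 + L)) := by ring


noncomputable def Zterm {Ω : Type*} (B : ℝ → Ω → ℝ) (p : ℕ × ℕ) (ω : Ω) : ENNReal :=
  if p.2 < 2 ^ p.1 then
    ENNReal.ofReal (|B (((p.2 : ℝ) + 1) / 2 ^ p.1) ω - B ((p.2 : ℝ) / 2 ^ p.1) ω| / dyA p.1)
  else 0

noncomputable def Zsup {Ω : Type*} (B : ℝ → Ω → ℝ) (ω : Ω) : ENNReal := ⨆ p, Zterm B p ω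

lemma measurable_Zsup {Ω : Type*} [MeasurableSpace Ω] {B : ℝ → Ω → ℝ}
    (hm : ∀ t, Measurable (B t)) : Measurable (Zsup B) := by
  apply Measurable.iSup
  intro p
  unfold Zterm
  split_ifs with h
  · exact Measurable.ennreal_ofReal (((hm _).sub (hm _)).abs.div_const _)
  · exact measurable_const

lemma Zterm_tail {Ω : Type*} [MeasurableSpace Ω] {μ : Measure Ω} [IsProbabilityMeasure μ]
    {B : ℝ → Ω → ℝ} (hm : ∀ t, Measurable (B t))
    (hmap : ∀ s t : ℝ, 0 ≤ s → s ≤ t →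
      Measure.map (fun ω => B t ω - B s ω) μ = gaussianReal 0 (Real.toNNReal (t - s)))
    (x : ℝ) (hx : 0 ≤ x) (n k : ℕ) (hk : k < 2 ^ n) :
    μ {ω | ENNReal.ofReal x < Zterm B (n, k) ω}
      ≤ ENNReal.ofReal (2 * Real.exp (-(x ^ 2 * (n + 1)) / 2)) := by
  set t0 := (k : ℝ) / 2 ^ n with ht0def
  set t1 := ((k : ℝ) + 1) / 2 ^ n with ht1def
  have ht0 : 0 ≤ t0 := by positivity
  have ht01 : t0 ≤ t1 := by
    rw [ht0def, ht1def, div_le_div_iff₀ (by positivity) (by positivity)]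
    nlinarith [pow_pos (show (0:ℝ) < 2 by norm_num) n]
  have hvar : t1 - t0 = (1 : ℝ) / 2 ^ n := by rw [ht0def, ht1def]; ring
  have hsub : {ω | ENNReal.ofReal x < Zterm B (n, k) ω}
      ⊆ {ω | x * dyA n < |B t1 ω - B t0 ω|} := by
    intro ω h
    simp only [Zterm, if_pos hk, Set.mem_setOf_eq] at h
    have hq : x < |B t1 ω - B t0 ω| / dyA n := by
      by_contra hc
      push_neg at hc
      exact absurd h (not_lt.mpr (ENNReal.ofReal_le_ofReal hc))
    exact (lt_div_iff₀ (dyA_pos n)).mp hq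
  have hmeas : Measurable fun ω => B t1 ω - B t0 ω := (hm _).sub (hm _)
  have hset : MeasurableSet {z : ℝ | x * dyA n < |z|} :=
    measurable_abs measurableSet_Ioi
  set v := Real.toNNReal ((1 : ℝ) / 2 ^ n) with hvdef
  have hv : v ≠ 0 := (Real.toNNReal_pos.mpr (by positivity)).ne'
  have hvcoe : (v : ℝ) = (1 : ℝ) / 2 ^ n := Real.coe_toNNReal _ (by positivity)
  calc μ {ω | ENNReal.ofReal x < Zterm B (n, k) ω}
      ≤ μ {ω | x * dyA n < |B t1 ω - B t0 ω|} := measure_mono hsub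
    _ = (μ.map (fun ω => B t1 ω - B t0 ω)) {z : ℝ | x * dyA n < |z|} :=
        (Measure.map_apply hmeas hset).symm
    _ = gaussianReal 0 v {z : ℝ | x * dyA n < |z|} := by rw [hmap t0 t1 ht0 ht01, hvar]
    _ ≤ ENNReal.ofReal (2 * Real.exp (-(x * dyA n) ^ 2 / (2 * v))) :=
        gaussianReal_abs_tail v hv _ (mul_nonneg hx (dyA_pos n).le)
    _ = ENNReal.ofReal (2 * Real.exp (-(x ^ 2 * (n + 1)) / 2)) := by
        congr 2
        rw [hvcoe, mul_pow, dyA_sq]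
        field_simp

lemma Zsup_tail {Ω : Type*} [MeasurableSpace Ω] {μ : Measure Ω} [IsProbabilityMeasure μ]
    {B : ℝ → Ω → ℝ} (hm : ∀ t, Measurable (B t))
    (hmap : ∀ s t : ℝ, 0 ≤ s → s ≤ t →
      Measure.map (fun ω => B t ω - B s ω) μ = gaussianReal 0 (Real.toNNReal (t - s)))
    (x : ℝ) (hx : 2 ≤ x) :
    μ {ω | ENNReal.ofReal x < Zsup B ω} ≤ ENNReal.ofReal (4 * Real.exp (-x ^ 2 / 2)) := by
  have hx0 : (0:ℝ) ≤ x := by linarith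
  set R := ENNReal.ofReal (2 * Real.exp (-x ^ 2 / 2)) with hRdef
  have hrhalf : 2 * Real.exp (-x ^ 2 / 2) ≤ 1 / 2 := by
    have h1 : Real.exp (-x ^ 2 / 2) ≤ Real.exp (-2 : ℝ) := by
      apply Real.exp_le_exp.mpr
      nlinarith
    have h2 : Real.exp (-2 : ℝ) ≤ 1 / 4 := by
      have h3 : (2:ℝ) ≤ Real.exp 1 := by
        have := Real.exp_one_gt_d9
        linarith
      have h4 : (4:ℝ) ≤ Real.exp 2 := by
        calc (4:ℝ) = 2 * 2 := by norm_num
          _ ≤ Real.exp 1 * Real.exp 1 := by nlinarith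
          _ = Real.exp 2 := by rw [← Real.exp_add]; norm_num
      rw [Real.exp_neg, ← one_div]
      exact one_div_le_one_div_of_le (by norm_num) h4
    linarith
  have hsub : {ω | ENNReal.ofReal x < Zsup B ω}
      ⊆ ⋃ p : ℕ × ℕ, {ω | ENNReal.ofReal x < Zterm B p ω} := by
    intro ω h
    rw [Set.mem_setOf_eq, Zsup, lt_iSup_iff] at h
    obtain ⟨p, hp⟩ := h
    exact Set.mem_iUnion.mpr ⟨p, hp⟩
  have hperterm : ∀ p : ℕ × ℕ, μ {ω | ENNReal.ofReal x < Zterm B p ω}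
      ≤ (if p.2 < 2 ^ p.1 then ENNReal.ofReal (2 * Real.exp (-(x ^ 2 * (p.1 + 1)) / 2)) else 0) := by
    rintro ⟨n, k⟩
    by_cases hk : k < 2 ^ n
    · rw [if_pos hk]
      exact Zterm_tail hm hmap x hx0 n k hk
    · rw [if_neg hk]
      have hempty : {ω | ENNReal.ofReal x < Zterm B (n, k) ω} = ∅ := by
        ext ω
        simp [Zterm, hk]
      rw [hempty, measure_empty]
  have hinner : ∀ n : ℕ,
      (∑' k : ℕ, (if k < 2 ^ n then ENNReal.ofReal (2 * Real.exp (-(x ^ 2 * (n + 1)) / 2)) else 0))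
        = (2 ^ n : ℕ) * ENNReal.ofReal (2 * Real.exp (-(x ^ 2 * (n + 1)) / 2)) := by
    intro n
    rw [tsum_eq_sum (s := Finset.range (2 ^ n))
      (fun k hk => if_neg (fun hlt => hk (Finset.mem_range.mpr hlt)))]
    rw [Finset.sum_congr rfl (fun k hk => if_pos (Finset.mem_range.mp hk)), Finset.sum_const,
      Finset.card_range, nsmul_eq_mul]
  have hpow : ∀ n : ℕ, (2 ^ n : ℕ) * ENNReal.ofReal (2 * Real.exp (-(x ^ 2 * (n + 1)) / 2))
      = R ^ (n + 1) := by
    intro n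
    have hreal : (2:ℝ) ^ n * (2 * Real.exp (-(x ^ 2 * (n + 1)) / 2))
        = (2 * Real.exp (-x ^ 2 / 2)) ^ (n + 1) := by
      rw [mul_pow, ← Real.exp_nat_mul,
        show ((n + 1 : ℕ) : ℝ) * (-x ^ 2 / 2) = -(x ^ 2 * (n + 1)) / 2 by push_cast; ring,
        pow_succ]
      ring
    have hcast : ((2 ^ n : ℕ) : ℝ≥0∞) = ENNReal.ofReal ((2:ℝ) ^ n) := by
      rw [ENNReal.ofReal_pow (by norm_num : (0:ℝ) ≤ 2), ENNReal.ofReal_ofNat]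
      push_cast
      ring
    rw [hRdef, ← ENNReal.ofReal_pow (by positivity), ← hreal,
      ENNReal.ofReal_mul (by positivity : (0:ℝ) ≤ (2:ℝ) ^ n), hcast]
  calc μ {ω | ENNReal.ofReal x < Zsup B ω}
      ≤ μ (⋃ p : ℕ × ℕ, {ω | ENNReal.ofReal x < Zterm B p ω}) := measure_mono hsub
    _ ≤ ∑' p : ℕ × ℕ, μ {ω | ENNReal.ofReal x < Zterm B p ω} := measure_iUnion_le _
    _ ≤ ∑' p : ℕ × ℕ, (if p.2 < 2 ^ p.1 then
          ENNReal.ofReal (2 * Real.exp (-(x ^ 2 * (p.1 + 1)) / 2)) else 0) :=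
        ENNReal.tsum_le_tsum hperterm
    _ = ∑' n : ℕ, ∑' k : ℕ, (if k < 2 ^ n then
          ENNReal.ofReal (2 * Real.exp (-(x ^ 2 * (n + 1)) / 2)) else 0) := ENNReal.tsum_prod'
    _ = ∑' n : ℕ, R ^ (n + 1) := by
        congr 1
        funext n
        rw [hinner n, hpow n]
    _ = R * ∑' n : ℕ, R ^ n := by
        rw [← ENNReal.tsum_mul_left]
        congr 1
        funext n
        rw [pow_succ]
        ring
    _ = R * (1 - R)⁻¹ := by rw [ENNReal.tsum_geometric]
    _ ≤ R * 2 := by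
        apply mul_le_mul_right _ R
        have h2inveq : ((2:ℝ≥0∞))⁻¹ = ENNReal.ofReal (1/2) := by
          rw [ENNReal.ofReal_div_of_pos (by norm_num), ENNReal.ofReal_one,
            ENNReal.ofReal_ofNat, one_div]
        have hR2 : R ≤ 2⁻¹ := by
          rw [hRdef, h2inveq]
          exact ENNReal.ofReal_le_ofReal hrhalf
        have hhalf : (2:ℝ≥0∞)⁻¹ ≤ 1 - R := by
          calc (2:ℝ≥0∞)⁻¹ = 1 - 2⁻¹ := ENNReal.one_sub_inv_two.symm
            _ ≤ 1 - R := tsub_le_tsub_left hR2 1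
        calc (1 - R)⁻¹ ≤ ((2:ℝ≥0∞)⁻¹)⁻¹ := ENNReal.inv_le_inv' hhalf
          _ = 2 := inv_inv 2
    _ = ENNReal.ofReal (4 * Real.exp (-x ^ 2 / 2)) := by
        rw [hRdef, mul_comm, show ((2:ℝ≥0∞)) = ENNReal.ofReal 2 from (ENNReal.ofReal_ofNat 2).symm,
          ← ENNReal.ofReal_mul (by norm_num : (0:ℝ) ≤ 2)]
        congr 1
        ring

/-- A standard one-dimensional Brownian motion: starts at zero, has a.s. continuous paths,
Gaussian increments of variance `t - s`, and independent increments. -/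
def IsStandardBrownianMotion {Ω : Type*} [MeasurableSpace Ω] (μ : Measure Ω)
    (B : ℝ → Ω → ℝ) : Prop :=
  (∀ t : ℝ, Measurable (B t)) ∧
  (∀ᵐ ω ∂μ, B 0 ω = 0) ∧
  (∀ᵐ ω ∂μ, Continuous fun t => B t ω) ∧
  (∀ s t : ℝ, 0 ≤ s → s ≤ t →
    Measure.map (fun ω => B t ω - B s ω) μ = gaussianReal 0 (Real.toNNReal (t - s))) ∧
  (∀ (n : ℕ) (τ : ℕ → ℝ), Monotone τ → (∀ i, 0 ≤ τ i) →
    iIndepFun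
      (fun i : Fin n => fun ω => B (τ (i + 1)) ω - B (τ i) ω) μ)

/-- The normalized modulus of continuity of `B` on `[0,1]`, as an `ℝ≥0∞`-valued supremum
over all pairs `0 ≤ s < t ≤ 1`. -/
noncomputable def brownianModulus {Ω : Type*} [MeasurableSpace Ω]
    (B : ℝ → Ω → ℝ) (ω : Ω) : ENNReal :=
  ⨆ (p : ℝ × ℝ) (_ : 0 ≤ p.1 ∧ p.1 < p.2 ∧ p.2 ≤ 1),
    ENNReal.ofReal (|B p.2 ω - B p.1 ω| /
      Real.sqrt ((p.2 - p.1) * (1 + Real.log (1 / (p.2 - p.1)))))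

lemma modulus_le_Zsup {Ω : Type*} [MeasurableSpace Ω] {B : ℝ → Ω → ℝ} {ω : Ω}
    (hcont : Continuous fun t => B t ω) (hfin : Zsup B ω ≠ ⊤) :
    brownianModulus B ω ≤ ENNReal.ofReal (46 * (Zsup B ω).toReal) := by
  set x := (Zsup B ω).toReal with hxdef
  have hx0 : 0 ≤ x := ENNReal.toReal_nonneg
  have hdy : ∀ n k : ℕ, k < 2 ^ n →
      |B (((k:ℝ) + 1) / 2 ^ n) ω - B ((k:ℝ) / 2 ^ n) ω| ≤ x * dyA n := by
    intro n k hk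
    have hterm : Zterm B (n, k) ω ≤ Zsup B ω := le_iSup (fun p => Zterm B p ω) (n, k)
    rw [show Zsup B ω = ENNReal.ofReal x by rw [hxdef, ENNReal.ofReal_toReal hfin]] at hterm
    simp only [Zterm, if_pos hk] at hterm
    have hq : |B (((k:ℝ) + 1) / 2 ^ n) ω - B ((k:ℝ) / 2 ^ n) ω| / dyA n ≤ x :=
      (ENNReal.ofReal_le_ofReal_iff hx0).mp hterm
    exact (div_le_iff₀ (dyA_pos n)).mp hq
  apply iSup₂_le
  rintro ⟨s, t⟩ ⟨hs, hst, ht⟩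
  simp only at hs hst ht ⊢
  have hδ0 : (0:ℝ) < t - s := by linarith
  have hδ1 : t - s ≤ 1 := by linarith
  have hL : 0 ≤ Real.log (1 / (t - s)) := Real.log_nonneg (by rw [le_div_iff₀ hδ0]; linarith)
  have hsqrt : 0 < Real.sqrt ((t - s) * (1 + Real.log (1 / (t - s)))) :=
    Real.sqrt_pos.mpr (by nlinarith)
  have hchain := chaining_main hcont hx0 hdy hs hst ht
  apply ENNReal.ofReal_le_ofReal
  rw [div_le_iff₀ hsqrt]
  calc |B t ω - B s ω| ≤ 46 * x * Real.sqrt ((t - s) * (1 + Real.log (1 / (t - s)))) := hchain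
    _ = 46 * x * Real.sqrt ((t - s) * (1 + Real.log (1 / (t - s)))) := rfl

theorem brownian_modulus_finite_and_exp_integrable {Ω : Type*} [MeasurableSpace Ω]
    (μ : Measure Ω) [IsProbabilityMeasure μ] (B : ℝ → Ω → ℝ)
    (hB : IsStandardBrownianMotion μ B) :
    (∀ᵐ ω ∂μ, brownianModulus B ω < ⊤) ∧
    ∃ α : ℝ, 0 < α ∧
      ∫⁻ ω, ENNReal.ofReal (Real.exp (α * ((brownianModulus B ω).toReal) ^ 2)) ∂μ < ⊤ := by
  obtain ⟨hmeas, -, hcont, hmap, -⟩ := hB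
  have htail : ∀ x : ℝ, 2 ≤ x →
      μ {ω | ENNReal.ofReal x < Zsup B ω} ≤ ENNReal.ofReal (4 * Real.exp (-x ^ 2 / 2)) :=
    fun x hx => Zsup_tail hmeas hmap x hx
  have hZfin : ∀ᵐ ω ∂μ, Zsup B ω ≠ ⊤ := by
    rw [MeasureTheory.ae_iff]
    simp only [ne_eq, not_not]
    have hbound : ∀ n : ℕ, μ {ω | Zsup B ω = ⊤}
        ≤ ENNReal.ofReal (4 * Real.exp (-((n:ℝ) + 2) ^ 2 / 2)) := by
      intro n
      refine (measure_mono ?_).trans (htail ((n:ℝ) + 2)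
        (by linarith [Nat.cast_nonneg (α := ℝ) n]))
      intro ω h
      simp only [Set.mem_setOf_eq] at h ⊢
      rw [h]
      exact ENNReal.ofReal_lt_top
    have h0 : Filter.Tendsto (fun n : ℕ => 4 * Real.exp (-((n:ℝ) + 2) ^ 2 / 2))
        Filter.atTop (nhds 0) := by
      have hup : Filter.Tendsto (fun n : ℕ => 4 * Real.exp (-1 : ℝ) ^ n)
          Filter.atTop (nhds 0) := by
        have := (tendsto_pow_atTop_nhds_zero_of_lt_one (Real.exp_pos (-1:ℝ)).le
          (Real.exp_lt_one_iff.mpr (by norm_num))).const_mul (4:ℝ)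
        simpa using this
      apply tendsto_of_tendsto_of_tendsto_of_le_of_le tendsto_const_nhds hup
      · intro n; positivity
      · intro n
        have hexp : Real.exp (-((n:ℝ) + 2) ^ 2 / 2) ≤ Real.exp (-1:ℝ) ^ n := by
          rw [← Real.exp_nat_mul]
          apply Real.exp_le_exp.mpr
          nlinarith [Nat.cast_nonneg (α := ℝ) n]
        nlinarith
    have hten : Filter.Tendsto (fun n : ℕ => ENNReal.ofReal (4 * Real.exp (-((n:ℝ) + 2) ^ 2 / 2)))
        Filter.atTop (nhds 0) := by
      have := ENNReal.tendsto_ofReal h0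
      simpa using this
    exact le_antisymm (ge_of_tendsto' hten hbound) (by simp)
  constructor
  · filter_upwards [hcont, hZfin] with ω h1 h2
    exact lt_of_le_of_lt (modulus_le_Zsup h1 h2) ENNReal.ofReal_lt_top
  · refine ⟨(67712:ℝ)⁻¹, by norm_num, ?_⟩
    set W : Ω → ℝ := fun ω => (Zsup B ω).toReal with hWdef
    have hWmeas : Measurable W := (measurable_Zsup hmeas).ennreal_toReal
    set S : ℕ → Set Ω := fun j => {ω | (j:ℝ) ≤ W ω} ∩ {ω | W ω < (j:ℝ) + 1} with hSdef
    have hSmeas : ∀ j, MeasurableSet (S j) :=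
      fun j => (measurableSet_le measurable_const hWmeas).inter
        (measurableSet_lt hWmeas measurable_const)
    set C : ℕ → ℝ≥0∞ := fun j => ENNReal.ofReal (Real.exp (((j:ℝ) + 1) ^ 2 / 32)) with hCdef
    have hae : ∀ᵐ ω ∂μ,
        ENNReal.ofReal (Real.exp ((67712:ℝ)⁻¹ * ((brownianModulus B ω).toReal) ^ 2))
          ≤ ENNReal.ofReal (Real.exp (W ω ^ 2 / 32)) := by
      filter_upwards [hcont, hZfin] with ω h1 h2
      have hble := modulus_le_Zsup h1 h2
      have hW0 : 0 ≤ W ω := ENNReal.toReal_nonneg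
      have hM : (brownianModulus B ω).toReal ≤ 46 * W ω := by
        have := ENNReal.toReal_mono ENNReal.ofReal_ne_top hble
        rwa [ENNReal.toReal_ofReal (by positivity)] at this
      have hM0 : 0 ≤ (brownianModulus B ω).toReal := ENNReal.toReal_nonneg
      apply ENNReal.ofReal_le_ofReal
      apply Real.exp_le_exp.mpr
      have hsq : ((brownianModulus B ω).toReal) ^ 2 ≤ (46 * W ω) ^ 2 := by nlinarith
      calc (67712:ℝ)⁻¹ * ((brownianModulus B ω).toReal) ^ 2
          ≤ (67712:ℝ)⁻¹ * (46 * W ω) ^ 2 := by nlinarith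
        _ = W ω ^ 2 / 32 := by ring
    have hpt : ∀ ω, ENNReal.ofReal (Real.exp (W ω ^ 2 / 32))
        ≤ ∑' j : ℕ, Set.indicator (S j) (fun _ => C j) ω := by
      intro ω
      have hW0 : 0 ≤ W ω := ENNReal.toReal_nonneg
      set j0 := ⌊W ω⌋₊ with hj0
      have hmem : ω ∈ S j0 := ⟨Nat.floor_le hW0, Nat.lt_floor_add_one (W ω)⟩
      calc ENNReal.ofReal (Real.exp (W ω ^ 2 / 32)) ≤ C j0 := by
            apply ENNReal.ofReal_le_ofReal
            apply Real.exp_le_exp.mpr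
            have hlt : W ω ≤ (j0:ℝ) + 1 := (Nat.lt_floor_add_one (W ω)).le
            nlinarith
        _ = Set.indicator (S j0) (fun _ => C j0) ω := (Set.indicator_of_mem hmem (fun _ => C j0)).symm
        _ ≤ ∑' j : ℕ, Set.indicator (S j) (fun _ => C j) ω :=
            ENNReal.le_tsum j0
    have hterm : ∀ j : ℕ, C j * μ (S j)
        ≤ ENNReal.ofReal (4 * Real.exp 1) * (ENNReal.ofReal (Real.exp (-2⁻¹ : ℝ))) ^ j := by
      intro j
      have hrhs : ENNReal.ofReal (4 * Real.exp 1) * (ENNReal.ofReal (Real.exp (-2⁻¹ : ℝ))) ^ j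
          = ENNReal.ofReal (4 * Real.exp (1 - (j:ℝ) / 2)) := by
        rw [← ENNReal.ofReal_pow (Real.exp_nonneg _), ← Real.exp_nat_mul,
          ← ENNReal.ofReal_mul (by positivity), mul_assoc, ← Real.exp_add]
        congr 2
        push_cast
        ring
      rw [hrhs]
      by_cases hj : j ≤ 2
      · have hj2 : (j:ℝ) ≤ 2 := by exact_mod_cast hj
        have h1 : Real.exp (((j:ℝ) + 1) ^ 2 / 32) ≤ Real.exp 1 := by
          apply Real.exp_le_exp.mpr
          nlinarith [Nat.cast_nonneg (α := ℝ) j]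
        have h2 : Real.exp 1 ≤ 4 := by
          have := Real.exp_one_lt_d9
          linarith
        have h3 : (4:ℝ) ≤ 4 * Real.exp (1 - (j:ℝ) / 2) := by
          have := Real.one_le_exp (show (0:ℝ) ≤ 1 - (j:ℝ)/2 by linarith)
          nlinarith
        calc C j * μ (S j) ≤ C j * 1 := mul_le_mul_right prob_le_one _
          _ = C j := mul_one _
          _ ≤ ENNReal.ofReal (4 * Real.exp (1 - (j:ℝ) / 2)) :=
              ENNReal.ofReal_le_ofReal (by linarith)
      · push_neg at hj
        have hj3 : (3:ℝ) ≤ (j:ℝ) := by exact_mod_cast hj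
        have hμS : μ (S j) ≤ ENNReal.ofReal (4 * Real.exp (-((j:ℝ) - 1) ^ 2 / 2)) := by
          refine (measure_mono ?_).trans (htail ((j:ℝ) - 1) (by linarith))
          rintro ω ⟨hj1, -⟩
          simp only [Set.mem_setOf_eq] at hj1 ⊢
          rcases eq_or_ne (Zsup B ω) ⊤ with h | h
          · rw [h]; exact ENNReal.ofReal_lt_top
          · rw [show Zsup B ω = ENNReal.ofReal (W ω) by rw [hWdef, ENNReal.ofReal_toReal h]]
            rw [ENNReal.ofReal_lt_ofReal_iff (by linarith : (0:ℝ) < W ω)]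
            linarith
        calc C j * μ (S j) ≤ C j * ENNReal.ofReal (4 * Real.exp (-((j:ℝ) - 1) ^ 2 / 2)) :=
              mul_le_mul_right hμS _
          _ = ENNReal.ofReal (Real.exp (((j:ℝ) + 1) ^ 2 / 32) * (4 * Real.exp (-((j:ℝ) - 1) ^ 2 / 2))) := by
              rw [hCdef, ← ENNReal.ofReal_mul (Real.exp_nonneg _)]
          _ ≤ ENNReal.ofReal (4 * Real.exp (1 - (j:ℝ) / 2)) := by
              apply ENNReal.ofReal_le_ofReal
              rw [show Real.exp (((j:ℝ) + 1) ^ 2 / 32) * (4 * Real.exp (-((j:ℝ) - 1) ^ 2 / 2))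
                  = 4 * Real.exp (((j:ℝ) + 1) ^ 2 / 32 + -((j:ℝ) - 1) ^ 2 / 2) by
                rw [Real.exp_add]; ring]
              have hexp : ((j:ℝ) + 1) ^ 2 / 32 + -((j:ℝ) - 1) ^ 2 / 2 ≤ 1 - (j:ℝ) / 2 := by
                nlinarith [sq_nonneg ((j:ℝ) - 5/3)]
              nlinarith [Real.exp_le_exp.mpr hexp, Real.exp_pos (1 - (j:ℝ)/2)]
    have hfinal : (∑' j : ℕ, ENNReal.ofReal (4 * Real.exp 1)
        * (ENNReal.ofReal (Real.exp (-2⁻¹ : ℝ))) ^ j) < ⊤ := by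
      rw [ENNReal.tsum_mul_left, ENNReal.tsum_geometric]
      have hρ : ENNReal.ofReal (Real.exp (-2⁻¹ : ℝ)) < 1 := by
        rw [← ENNReal.ofReal_one]
        exact (ENNReal.ofReal_lt_ofReal_iff one_pos).mpr (Real.exp_lt_one_iff.mpr (by norm_num))
      apply ENNReal.mul_lt_top ENNReal.ofReal_lt_top
      rw [ENNReal.inv_lt_top]
      exact tsub_pos_iff_lt.mpr hρ
    calc ∫⁻ ω, ENNReal.ofReal (Real.exp ((67712:ℝ)⁻¹ * ((brownianModulus B ω).toReal) ^ 2)) ∂μ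
        ≤ ∫⁻ ω, ENNReal.ofReal (Real.exp (W ω ^ 2 / 32)) ∂μ := lintegral_mono_ae hae
      _ ≤ ∫⁻ ω, ∑' j : ℕ, Set.indicator (S j) (fun _ => C j) ω ∂μ := lintegral_mono hpt
      _ = ∑' j : ℕ, ∫⁻ ω, Set.indicator (S j) (fun _ => C j) ω ∂μ :=
          lintegral_tsum (fun j => (measurable_const.indicator (hSmeas j)).aemeasurable)
      _ = ∑' j : ℕ, C j * μ (S j) := by
          congr 1
          funext j
          rw [lintegral_indicator_const (hSmeas j)]
      _ ≤ ∑' j : ℕ, ENNReal.ofReal (4 * Real.exp 1)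
            * (ENNReal.ofReal (Real.exp (-2⁻¹ : ℝ))) ^ j := ENNReal.tsum_le_tsum hterm
      _ < ⊤ := hfinal
end
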